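/- arXiv:1609.03116 — 4 statements merged into one kernel-verified Lean document; each statement's English description precedes it below -/
import Mathlib

section
/- For any strictly increasing sequence of positive integers a_1 < a_2 < ... < a_n, the quantity E(a_1,...,a_n) = 2^{n^2} / (0!·2!·4!···(2n-2)!) · ∏_{1≤i<j≤n}(a_j - a_i) · ∏_{1≤i<j≤n}(a_i + a_j - 1) is a positive integer. -/
open Finset

/-- The function `E(a_1,...,a_n)` of the paper. -/
noncomputable def Efun (n : ℕ) (a : Fin n → ℕ) : ℚ :=
  (2 ^ (n ^ 2) / ∏ i ∈ Finset.range n, (Nat.factorial (2 * i) : ℚ))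
    * ∏ p ∈ Finset.univ.filter (fun p : Fin n × Fin n => p.1 < p.2), ((a p.2 : ℚ) - (a p.1 : ℚ))
    * ∏ p ∈ Finset.univ.filter (fun p : Fin n × Fin n => p.1 < p.2),
        ((a p.1 : ℚ) + (a p.2 : ℚ) - 1)

open Polynomial

lemma descPochhammer_eval_prod (k : ℕ) (x : ℚ) :
    (descPochhammer ℚ k).eval x = ∏ j ∈ Finset.range k, (x - j) := by
  induction k with
  | zero => simp
  | succ k ih => rw [descPochhammer_succ_eval, ih, Finset.prod_range_succ]

lemma prod_pairs {M : Type*} [CommMonoid M] (n : ℕ) (f : Fin n → Fin n → M) :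
    ∏ p ∈ Finset.univ.filter (fun p : Fin n × Fin n => p.1 < p.2), f p.1 p.2
      = ∏ i : Fin n, ∏ j ∈ Finset.Ioi i, f i j := by
  rw [Finset.prod_sigma']
  refine Finset.prod_nbij (fun p => ⟨p.1, p.2⟩) ?_ ?_ ?_ ?_
  · intro p hp
    simp only [Finset.mem_filter, Finset.mem_univ, true_and] at hp
    simp [hp]
  · intro p hp q hq h
    have h1 : p.1 = q.1 := congrArg Sigma.fst h
    have h2 : p.2 = q.2 := by
      have := congrArg (fun s : Σ _ : Fin n, Fin n => s.snd) h
      simpa using this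
    exact Prod.ext h1 h2
  · intro p hp
    simp only [Finset.coe_sigma, Set.mem_sigma_iff, Finset.mem_coe, Finset.mem_univ,
      Finset.mem_Ioi, true_and] at hp
    exact ⟨(p.1, p.2), by simp [hp], rfl⟩
  · intros; rfl

lemma entry_prod (b k : ℕ) :
    ∏ j ∈ Finset.range k, ((2*(b:ℚ)+1)^2 - (2*(j:ℚ)+1)^2)
      = 4^k * ((b+k).descFactorial (2*k) : ℚ) := by
  have hL : ∏ j ∈ Finset.range k, ((2*(b:ℚ)+1)^2 - (2*(j:ℚ)+1)^2)
      = ∏ j ∈ Finset.range k, ((4:ℚ) * (((b:ℚ)+1+j) * ((b:ℚ)-j))) :=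
    Finset.prod_congr rfl fun j _ => by ring
  have hdesc : (((b+k).descFactorial (2*k)) : ℚ)
      = ∏ m ∈ Finset.range (2*k), ((b:ℚ) + k - m) := by
    rw [← descPochhammer_eval_eq_descFactorial ℚ (b+k) (2*k), descPochhammer_eval_prod]
    exact Finset.prod_congr rfl fun m _ => by push_cast; ring
  rw [hL, Finset.prod_mul_distrib, Finset.prod_const, Finset.card_range, hdesc,
    two_mul k, Finset.prod_range_add, Finset.prod_mul_distrib]
  congr 1
  congr 1
  · rw [← Finset.prod_range_reflect (fun j => (b:ℚ) + 1 + j) k]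
    refine Finset.prod_congr rfl fun j hj => ?_
    rw [Finset.mem_range] at hj
    have hc : ((k - 1 - j : ℕ) : ℚ) = (k:ℚ) - 1 - j := by
      rw [Nat.cast_sub (by omega), Nat.cast_sub (by omega : 1 ≤ k)]
      push_cast; ring
    rw [hc]; ring
  · refine Finset.prod_congr rfl fun j hj => ?_
    push_cast; ring

noncomputable def pcol (k : ℕ) : ℚ[X] :=
  ∏ j ∈ Finset.range k, (X - C ((2*(j:ℚ)+1)^2))

lemma pcol_monic (k : ℕ) : (pcol k).Monic :=
  monic_prod_of_monic _ _ fun j _ => monic_X_sub_C _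

lemma pcol_natDegree (k : ℕ) : (pcol k).natDegree = k := by
  rw [pcol, natDegree_prod_of_monic _ _ fun j _ => monic_X_sub_C _,
    Finset.sum_congr rfl fun j _ => natDegree_X_sub_C _]
  simp

lemma pcol_eval (k : ℕ) (x : ℚ) :
    (pcol k).eval x = ∏ j ∈ Finset.range k, (x - (2*(j:ℚ)+1)^2) := by
  simp [pcol, eval_prod]

noncomputable def Emat (n : ℕ) (a : Fin n → ℕ) : Matrix (Fin n) (Fin n) ℤ :=
  Matrix.of fun i k => 2 * 4 ^ (k : ℕ) * ((a i - 1 + k).choose (2 * k) : ℤ)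

lemma Ecore_eq_det (n : ℕ) (a : Fin n → ℕ) (hpos : ∀ i, 0 < a i) :
    (2 ^ (n ^ 2) / ∏ i ∈ Finset.range n, (Nat.factorial (2 * i) : ℚ))
      * ((∏ p ∈ Finset.univ.filter (fun p : Fin n × Fin n => p.1 < p.2),
            ((a p.2 : ℚ) - (a p.1 : ℚ)))
        * (∏ p ∈ Finset.univ.filter (fun p : Fin n × Fin n => p.1 < p.2),
            ((a p.1 : ℚ) + (a p.2 : ℚ) - 1)))
      = ((Emat n a).det : ℚ) := by
  classical
  set c : Fin n → ℚ := fun i => (2 * (a i : ℚ) - 1) ^ 2 with hc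
  set K : ℕ := ∑ i : Fin n, (Finset.Ioi i).card with hKdef
  set D : ℚ := ∏ i ∈ Finset.range n, (Nat.factorial (2 * i) : ℚ) with hD
  have hDne : D ≠ 0 := by
    rw [hD]
    exact Finset.prod_ne_zero_iff.mpr fun i _ => Nat.cast_ne_zero.mpr (Nat.factorial_ne_zero _)
  -- power counting
  have hKn : n ^ 2 = n + 2 * K := by
    have h1 : K = ∑ i ∈ Finset.range n, (n - 1 - i) := by
      rw [hKdef, Finset.sum_congr rfl fun (i : Fin n) _ => Fin.card_Ioi i]
      exact Fin.sum_univ_eq_sum_range (fun i => n - 1 - i) n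
    have h2 : K * 2 = n * (n - 1) := by
      rw [h1, Finset.sum_range_reflect (fun j => j) n, Finset.sum_range_id_mul_two]
    have h3 : ∀ m : ℕ, m ^ 2 = m + m * (m - 1) := by
      intro m
      cases m with
      | zero => rfl
      | succ l => simp [Nat.succ_sub_one]; ring
    linarith [h2, h3 n]
  have hpow : (2:ℚ) ^ (n ^ 2) = 2 ^ n * 4 ^ K := by
    rw [hKn, pow_add, pow_mul]
    norm_num
  -- vandermonde
  have hvand : (Matrix.vandermonde c).det
      = 4 ^ K * ((∏ i : Fin n, ∏ j ∈ Finset.Ioi i, ((a j : ℚ) - (a i : ℚ)))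
        * (∏ i : Fin n, ∏ j ∈ Finset.Ioi i, ((a i : ℚ) + (a j : ℚ) - 1))) := by
    rw [Matrix.det_vandermonde]
    have h4 : ∀ i : Fin n, ∏ j ∈ Finset.Ioi i, (c j - c i)
        = 4 ^ (Finset.Ioi i).card * ((∏ j ∈ Finset.Ioi i, ((a j:ℚ) - (a i:ℚ)))
          * ∏ j ∈ Finset.Ioi i, ((a i:ℚ) + (a j:ℚ) - 1)) := by
      intro i
      calc ∏ j ∈ Finset.Ioi i, (c j - c i)
          = ∏ j ∈ Finset.Ioi i, ((4:ℚ) * ((((a j:ℚ) - (a i:ℚ))) * ((a i:ℚ) + (a j:ℚ) - 1))) :=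
            Finset.prod_congr rfl fun j _ => by simp only [hc]; ring
        _ = (∏ _j ∈ Finset.Ioi i, (4:ℚ))
            * ∏ j ∈ Finset.Ioi i, ((((a j:ℚ) - (a i:ℚ))) * ((a i:ℚ) + (a j:ℚ) - 1)) :=
            Finset.prod_mul_distrib
        _ = _ := by rw [Finset.prod_const, Finset.prod_mul_distrib]
    rw [Finset.prod_congr rfl fun i _ => h4 i, Finset.prod_mul_distrib, Finset.prod_mul_distrib,
      Finset.prod_pow_eq_pow_sum]
    try ring
  -- determinant manipulations
  have hdet1 : (Matrix.vandermonde c).det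
      = (Matrix.of fun i k : Fin n => (pcol (k:ℕ)).eval (c i)).det :=
    Matrix.det_eval_matrixOfPolynomials_eq_det_vandermonde c (fun k => pcol (k:ℕ))
      (fun k => pcol_natDegree (k:ℕ)) (fun k => pcol_monic (k:ℕ))
  have hv : ∏ k : Fin n, ((2:ℚ) / (Nat.factorial (2 * (k:ℕ)) : ℚ)) = 2 ^ n / D := by
    rw [Finset.prod_div_distrib, Finset.prod_const, Finset.card_univ, Fintype.card_fin, hD,
      ← Fin.prod_univ_eq_prod_range (fun i => (Nat.factorial (2 * i) : ℚ)) n]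
  have hentry : ∀ i k : Fin n,
      ((2:ℚ) / (Nat.factorial (2 * (k:ℕ)) : ℚ)) * (pcol (k:ℕ)).eval (c i)
        = ((Emat n a i k : ℤ) : ℚ) := by
    intro i k
    have h1a : (1:ℕ) ≤ a i := hpos i
    have hb : ((a i - 1 : ℕ) : ℚ) = (a i : ℚ) - 1 := by
      rw [Nat.cast_sub h1a]; norm_num
    have hcb : c i = (2 * ((a i - 1 : ℕ) : ℚ) + 1) ^ 2 := by
      simp only [hc]; rw [hb]; ring
    rw [pcol_eval, Finset.prod_congr rfl fun j _ => by rw [hcb],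
      entry_prod (a i - 1) (k:ℕ), Nat.descFactorial_eq_factorial_mul_choose]
    have hfne : ((Nat.factorial (2 * (k:ℕ)) : ℚ)) ≠ 0 :=
      Nat.cast_ne_zero.mpr (Nat.factorial_ne_zero _)
    simp only [Emat, Matrix.of_apply]
    push_cast
    field_simp
  have hmat : (Matrix.of fun i k : Fin n =>
        ((2:ℚ) / (Nat.factorial (2 * (k:ℕ)) : ℚ)) * (pcol (k:ℕ)).eval (c i))
      = Matrix.of fun i k : Fin n => ((Emat n a i k : ℤ) : ℚ) := by
    ext i k; exact hentry i k
  have hdet3 : (Matrix.of fun i k : Fin n => ((Emat n a i k : ℤ) : ℚ)).det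
      = ((Emat n a).det : ℚ) := by
    have h := RingHom.map_det (Int.castRingHom ℚ) (Emat n a)
    simpa [Matrix.map] using h.symm
  -- assemble
  have hP1 : ∏ p ∈ Finset.univ.filter (fun p : Fin n × Fin n => p.1 < p.2),
        ((a p.2 : ℚ) - (a p.1 : ℚ))
      = ∏ i : Fin n, ∏ j ∈ Finset.Ioi i, ((a j : ℚ) - (a i : ℚ)) :=
    prod_pairs n (fun i j => (a j : ℚ) - (a i : ℚ))
  have hP2 : ∏ p ∈ Finset.univ.filter (fun p : Fin n × Fin n => p.1 < p.2),
        ((a p.1 : ℚ) + (a p.2 : ℚ) - 1)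
      = ∏ i : Fin n, ∏ j ∈ Finset.Ioi i, ((a i : ℚ) + (a j : ℚ) - 1) :=
    prod_pairs n (fun i j => (a i : ℚ) + (a j : ℚ) - 1)
  rw [hP1, hP2]
  have hdet1' : (Matrix.det fun i k : Fin n => eval (c i) (pcol (k:ℕ)))
      = (Matrix.vandermonde c).det := hdet1.symm
  rw [← hdet3, ← hmat, Matrix.det_mul_row (v := fun k : Fin n => (2:ℚ) / (Nat.factorial (2 * (k:ℕ)) : ℚ))
    (A := fun i k : Fin n => eval (c i) (pcol (k:ℕ))), hv, hdet1', hvand, hpow]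
  field_simp

theorem Efun_pos_int (n : ℕ) (a : Fin n → ℕ) (hpos : ∀ i, 0 < a i) (hmono : StrictMono a) :
    ∃ k : ℕ, 0 < k ∧ Efun n a = (k : ℚ) := by
  classical
  set S : Finset (Fin n × Fin n) := Finset.univ.filter (fun p : Fin n × Fin n => p.1 < p.2)
    with hS
  set N : ℕ := S.card with hN
  set m : ℕ := ∏ p ∈ S, (a p.1 + a p.2 - 1) with hm
  have hmpos : 0 < m := by
    rw [hm]
    exact Finset.prod_pos fun p _ => by have := hpos p.1; have := hpos p.2; omega
  have hmcast : (∏ p ∈ S, ((a p.1 : ℚ) + (a p.2 : ℚ) - 1)) = (m : ℚ) := by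
    rw [hm, Nat.cast_prod]
    refine Finset.prod_congr rfl fun p _ => ?_
    have h1 := hpos p.1; have h2 := hpos p.2
    rw [Nat.cast_sub (by omega : 1 ≤ a p.1 + a p.2)]
    push_cast; ring
  have hP1pos : 0 < ∏ p ∈ S, ((a p.2 : ℚ) - (a p.1 : ℚ)) := by
    refine Finset.prod_pos fun p hp => ?_
    rw [hS, Finset.mem_filter] at hp
    have h := hmono hp.2
    have h' : (a p.1 : ℚ) < (a p.2 : ℚ) := by exact_mod_cast h
    linarith
  have hDpos : (0:ℚ) < ∏ i ∈ Finset.range n, (Nat.factorial (2 * i) : ℚ) :=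
    Finset.prod_pos fun i _ => by exact_mod_cast Nat.factorial_pos (2 * i)
  have hcore := Ecore_eq_det n a hpos
  have hEpos : (0:ℚ) < (((Emat n a).det : ℤ) : ℚ) := by
    rw [← hcore]
    have hm' : (0:ℚ) < (m:ℚ) := by exact_mod_cast hmpos
    have : (0:ℚ) < ∏ p ∈ S, ((a p.1 : ℚ) + (a p.2 : ℚ) - 1) := by rw [hmcast]; exact hm'
    have h2 : (0:ℚ) < 2 ^ (n ^ 2) := by positivity
    exact mul_pos (div_pos h2 hDpos) (mul_pos hP1pos this)
  have hdet_pos : 0 < (Emat n a).det := by exact_mod_cast hEpos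
  have htn : 0 < (Emat n a).det.toNat := by omega
  refine ⟨(Emat n a).det.toNat * m ^ (N - 1), Nat.mul_pos htn (pow_pos hmpos _), ?_⟩
  have hEfun : Efun n a
      = ((2 ^ (n ^ 2) / ∏ i ∈ Finset.range n, (Nat.factorial (2 * i) : ℚ))
        * ((∏ p ∈ S, ((a p.2 : ℚ) - (a p.1 : ℚ)))
          * (∏ p ∈ S, ((a p.1 : ℚ) + (a p.2 : ℚ) - 1))))
        * (m : ℚ) ^ (N - 1) := by
    rw [Efun, ← hS, Finset.prod_mul_distrib, Finset.prod_const, ← hN, hmcast]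
    rcases Nat.eq_zero_or_pos N with h0 | h1
    · have hSe : S = ∅ := Finset.card_eq_zero.mp (hN ▸ h0)
      have hm1 : m = 1 := by rw [hm, hSe, Finset.prod_empty]
      rw [h0, hm1]; norm_num
    · have hpow : (m:ℚ) ^ N = (m:ℚ) ^ (N - 1) * (m:ℚ) := by
        conv_lhs => rw [show N = (N - 1) + 1 from (Nat.succ_pred_eq_of_pos h1).symm]
        rw [pow_succ]
      rw [hpow]; ring
  rw [hEfun, hS] at *
  rw [hcore]
  have ht : ((Emat n a).det.toNat : ℤ) = (Emat n a).det := Int.toNat_of_nonneg hdet_pos.le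
  have ht' : ((Emat n a).det.toNat : ℚ) = ((Emat n a).det : ℚ) := by exact_mod_cast ht
  push_cast
  rw [ht', Int.cast_det]
end

section
/- For any strictly increasing sequence of positive integers a_1 < a_2 < ... < a_n, the quantity O(a_1,...,a_n) = 2^{n^2} / (1!·3!·5!···(2n-1)!) · ∏_{1≤i<j≤n}(a_j - a_i) · ∏_{1≤i≤j≤n}(a_i + a_j - 1) is a positive integer. -/
open Finset

open Polynomial

/-- The function `O(a_1,...,a_n)` of the paper. -/
noncomputable def Ofun (n : ℕ) (a : Fin n → ℕ) : ℚ :=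
  (2 ^ (n ^ 2) / ∏ i ∈ Finset.range n, (Nat.factorial (2 * i + 1) : ℚ))
    * ∏ p ∈ Finset.univ.filter (fun p : Fin n × Fin n => p.1 < p.2), ((a p.2 : ℚ) - (a p.1 : ℚ))
    * ∏ p ∈ Finset.univ.filter (fun p : Fin n × Fin n => p.1 ≤ p.2),
        ((a p.1 : ℚ) + (a p.2 : ℚ) - 1)

lemma cast_choose_succ_right (M K : ℕ) :
    ((K : ℚ) + 1) * (M.choose (K + 1)) = ((M : ℚ) - K) * M.choose K := by
  rcases le_or_gt K M with h | h
  · have h1 := Nat.choose_succ_right_eq M K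
    have h2 : ((M.choose (K+1) * (K+1) : ℕ) : ℚ) = ((M.choose K * (M - K) : ℕ) : ℚ) := by
      exact_mod_cast congrArg (fun t : ℕ => (t:ℚ)) h1
    push_cast [Nat.cast_sub h] at h2
    linarith
  · rw [Nat.choose_eq_zero_of_lt h, Nat.choose_eq_zero_of_lt (by omega)]
    simp

lemma cast_succ_mul_choose (N K : ℕ) :
    ((N : ℚ) + 1) * (N.choose K) = ((K : ℚ) + 1) * ((N+1).choose (K+1)) := by
  have h := Nat.add_one_mul_choose_eq N K
  have h2 : ((Nat.succ N * N.choose K : ℕ) : ℚ) = (((N+1).choose (K+1) * (K+1) : ℕ) : ℚ) := by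
    exact_mod_cast congrArg (fun t : ℕ => (t:ℚ)) h
  push_cast at h2
  linarith

lemma key (m j : ℕ) :
    (2*(m:ℚ)+1) * ∏ k ∈ range j, ((2*(m:ℚ)+1)^2 - (2*(k:ℚ)+1)^2)
      = (Nat.factorial (2*j+1) : ℚ) * 4^j *
        (((m+j).choose (2*j+1) : ℚ) + ((m+j+1).choose (2*j+1) : ℚ)) := by
  induction j with
  | zero => norm_num [Nat.choose_one_right]; ring
  | succ j ih =>
    rw [prod_range_succ, ← mul_assoc, ih]
    have hf : (Nat.factorial (2*(j+1)+1) : ℚ)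
        = (2*(j:ℚ)+3)*(2*(j:ℚ)+2)*(Nat.factorial (2*j+1) : ℚ) := by
      have h : 2*(j+1)+1 = (2*j+1) + 1 + 1 := by ring
      rw [h, Nat.factorial_succ, Nat.factorial_succ]
      push_cast; ring
    rw [hf]
    have hA := cast_choose_succ_right (m+j+1) (2*j+1)
    have hB := cast_choose_succ_right (m+j+1) (2*j+2)
    have hD := cast_choose_succ_right (m+j+2) (2*j+2)
    have hE1 := cast_succ_mul_choose (m+j) (2*j+1)
    have hE2 := cast_succ_mul_choose (m+j+1) (2*j+1)
    simp only [show 2*j+1+1 = 2*j+2 from by omega, show 2*j+2+1 = 2*j+3 from by omega,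
      show m+(j+1) = m+j+1 from by omega, show m+j+1+1 = m+j+2 from by omega,
      show 2*(j+1)+1 = 2*j+3 from by omega] at hA hB hD hE1 hE2 ⊢
    push_cast at hA hB hD hE1 hE2 ⊢
    set fq : ℚ := (Nat.factorial (2*j+1) : ℚ)
    set q4 : ℚ := (4:ℚ)^j
    linear_combination (fq*q4*4*((m:ℚ)-j))*hE1 + (fq*q4*4)*hA - (fq*q4*4*(2*(j:ℚ)+2))*hB
      - (fq*q4*4*(2*(j:ℚ)+2))*hD + (fq*q4*4*((m:ℚ)-j))*hE2

@[to_additive]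
lemma prod_pairs_lt {n : ℕ} {β : Type*} [CommMonoid β] (f : Fin n → Fin n → β) :
    ∏ p ∈ univ.filter (fun p : Fin n × Fin n => p.1 < p.2), f p.1 p.2
      = ∏ i : Fin n, ∏ j ∈ Ioi i, f i j := by
  rw [← Finset.prod_sigma univ (fun i => Ioi i) (fun x => f x.1 x.2)]
  refine Finset.prod_nbij' (fun p => ⟨p.1, p.2⟩) (fun x => (x.1, x.2)) ?_ ?_ ?_ ?_ ?_ <;>
    simp [Finset.mem_sigma, Finset.mem_Ioi]

lemma card_pairs_lt (n : ℕ) :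
    (univ.filter (fun p : Fin n × Fin n => p.1 < p.2)).card * 2 = n * n - n := by
  have h1 : (univ.filter (fun p : Fin n × Fin n => p.1 < p.2)).card
      = ∑ i : Fin n, (Ioi i).card := by
    rw [card_eq_sum_ones, sum_pairs_lt (fun _ _ => 1)]
    exact Finset.sum_congr rfl fun i _ => (card_eq_sum_ones _).symm
  rw [h1]
  have h2 : ∑ i : Fin n, (Ioi i).card = ∑ i ∈ range n, (n - 1 - i) := by
    rw [← Fin.sum_univ_eq_sum_range (fun i => n - 1 - i)]
    exact Finset.sum_congr rfl fun i _ => by rw [Fin.card_Ioi]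
  rw [h2]
  have h3 : ∑ i ∈ range n, (n - 1 - i) = ∑ i ∈ range n, i := by
    rw [← Finset.sum_range_reflect]
    exact Finset.sum_congr rfl fun i hi => by
      simp only [mem_range] at hi; omega
  rw [h3, Finset.sum_range_id_mul_two]
  rw [Nat.mul_sub, Nat.mul_one]

lemma prod_pairs_diag {n : ℕ} (a : Fin n → ℕ) :
    ∏ p ∈ univ.filter (fun p : Fin n × Fin n => p.1 = p.2), ((a p.1:ℚ) + a p.2 - 1)
      = ∏ i : Fin n, (2*(a i:ℚ) - 1) := by
  refine Finset.prod_nbij' (fun p => p.1) (fun i => (i, i)) ?_ ?_ ?_ ?_ ?_ <;>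
    simp +contextual [Prod.ext_iff]
  exact fun p => by ring

lemma filter_le_split (n : ℕ) :
    (univ.filter (fun p : Fin n × Fin n => p.1 ≤ p.2))
      = (univ.filter (fun p : Fin n × Fin n => p.1 < p.2))
        ∪ (univ.filter (fun p : Fin n × Fin n => p.1 = p.2)) := by
  rw [← filter_or]
  exact filter_congr fun p _ => by
    simp only [le_iff_lt_or_eq]

lemma disj_lt_eq (n : ℕ) :
    Disjoint (univ.filter (fun p : Fin n × Fin n => p.1 < p.2))
      (univ.filter (fun p : Fin n × Fin n => p.1 = p.2)) := by
  rw [Finset.disjoint_left]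
  intro p hp hq
  simp only [mem_filter] at hp hq
  exact absurd hq.2 (ne_of_lt hp.2)

lemma det_step (n : ℕ) (a : Fin n → ℕ) (hpos : ∀ i, 0 < a i) :
    ∃ z : ℤ,
      (∏ i : Fin n, (2*(a i:ℚ) - 1)) *
        ∏ i : Fin n, ∏ j ∈ Ioi i, ((2*(a j:ℚ)-1)^2 - (2*(a i:ℚ)-1)^2)
      = (∏ i ∈ range n, (Nat.factorial (2*i+1) : ℚ)) * z := by
  classical
  set b : Fin n → ℚ := fun i => 2*(a i:ℚ) - 1 with hbdef
  set x : Fin n → ℚ := fun i => (b i)^2 with hxdef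
  set p : Fin n → ℚ[X] := fun j => ∏ k ∈ range (j:ℕ), (X - C ((2*(k:ℚ)+1)^2)) with hpdef
  have h_monic : ∀ j, (p j).Monic := fun j => monic_prod_of_monic _ _ fun k _ => monic_X_sub_C _
  have h_deg : ∀ j : Fin n, (p j).natDegree = (j:ℕ) := by
    intro j
    rw [hpdef]
    rw [Polynomial.natDegree_prod_of_monic _ _ (fun k _ => monic_X_sub_C _)]
    simp only [Polynomial.natDegree_X_sub_C, Finset.sum_const, smul_eq_mul, mul_one,
      Finset.card_range]
  have heval : ∀ (i j : Fin n), (p j).eval (x i) = ∏ k ∈ range (j:ℕ), (x i - (2*(k:ℚ)+1)^2) := by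
    intro i j
    simp [hpdef, Polynomial.eval_prod]
  -- the integer matrix
  set N : Fin n → Fin n → ℕ := fun i j =>
    4^(j:ℕ) * ((a i - 1 + j).choose (2*(j:ℕ)+1) + (a i - 1 + j + 1).choose (2*(j:ℕ)+1)) with hN
  have hkey : ∀ (i j : Fin n),
      b i * (p j).eval (x i) = (Nat.factorial (2*(j:ℕ)+1) : ℚ) * ((N i j : ℕ) : ℚ) := by
    intro i j
    have h1 : 1 ≤ a i := hpos i
    have hm : (2*((a i - 1 : ℕ):ℚ)+1) = b i := by
      rw [Nat.cast_sub h1]; push_cast; ring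
    have hk := key (a i - 1) (j:ℕ)
    rw [hm] at hk
    rw [heval]
    simp only [hxdef, hN]
    push_cast
    linear_combination hk
  refine ⟨(Matrix.of fun i j => (N i j : ℤ)).det, ?_⟩
  have hvan : (Matrix.vandermonde x).det
      = (Matrix.of fun i j => (p j).eval (x i)).det :=
    Matrix.det_eval_matrixOfPolynomials_eq_det_vandermonde x p h_deg h_monic
  have h2 : (Matrix.of fun i j => b i * (p j).eval (x i)).det
      = (∏ i, b i) * (Matrix.of fun i j => (p j).eval (x i)).det :=
    Matrix.det_mul_column b _
  set Mq : Matrix (Fin n) (Fin n) ℚ := Matrix.of fun i j => ((N i j : ℕ):ℚ) with hMq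
  have h3 : (Matrix.of fun i j => b i * (p j).eval (x i)).det
      = (∏ j : Fin n, (Nat.factorial (2*(j:ℕ)+1) : ℚ)) * Mq.det := by
    have e : (Matrix.of fun i j => b i * (p j).eval (x i))
        = Matrix.of fun (i j : Fin n) => (Nat.factorial (2*(j:ℕ)+1) : ℚ) * Mq i j := by
      ext i j
      simp only [Matrix.of_apply, hMq]
      exact hkey i j
    rw [e]
    exact Matrix.det_mul_row (fun j : Fin n => (Nat.factorial (2*(j:ℕ)+1) : ℚ)) Mq
  have h4 : Mq.det = (((Matrix.of fun i j => (N i j : ℤ)).det : ℤ) : ℚ) := by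
    have e2 : Mq = ((Int.castRingHom ℚ).mapMatrix (Matrix.of fun i j => (N i j : ℤ))) := by
      ext i j
      simp [hMq]
    rw [e2, ← RingHom.map_det]
    simp
  have h5 : ∏ j : Fin n, (Nat.factorial (2*(j:ℕ)+1) : ℚ)
      = ∏ i ∈ range n, (Nat.factorial (2*i+1) : ℚ) :=
    Fin.prod_univ_eq_prod_range (fun i => (Nat.factorial (2*i+1) : ℚ)) n
  have hvd : (Matrix.vandermonde x).det = ∏ i : Fin n, ∏ j ∈ Ioi i, (x j - x i) :=
    Matrix.det_vandermonde x
  calc (∏ i : Fin n, b i) * ∏ i : Fin n, ∏ j ∈ Ioi i, (x j - x i)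
      = (∏ i, b i) * (Matrix.of fun i j => (p j).eval (x i)).det := by rw [← hvd, hvan]
    _ = (Matrix.of fun i j => b i * (p j).eval (x i)).det := h2.symm
    _ = (∏ i ∈ range n, (Nat.factorial (2*i+1) : ℚ))
          * (((Matrix.of fun i j => (N i j : ℤ)).det : ℤ) : ℚ) := by rw [h3, h4, h5]

theorem Ofun_pos_int (n : ℕ) (a : Fin n → ℕ) (hpos : ∀ i, 0 < a i) (hmono : StrictMono a) :
    ∃ k : ℕ, 0 < k ∧ Ofun n a = (k : ℚ) := by
  obtain ⟨z, hz⟩ := det_step n a hpos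
  have hFpos : 0 < ∏ i ∈ range n, (Nat.factorial (2*i+1) : ℚ) :=
    prod_pos fun i _ => by positivity
  have hF0 : (∏ i ∈ range n, (Nat.factorial (2*i+1) : ℚ)) ≠ 0 := ne_of_gt hFpos
  set N := (univ.filter (fun p : Fin n × Fin n => p.1 < p.2)).card with hN
  have hstruct : Ofun n a
      = (2 ^ (n ^ 2) / ∏ i ∈ range n, (Nat.factorial (2 * i + 1) : ℚ))
        * (∏ p ∈ univ.filter (fun p : Fin n × Fin n => p.1 < p.2), ((a p.2:ℚ) - a p.1))
        * (∏ p ∈ univ.filter (fun p : Fin n × Fin n => p.1 ≤ p.2),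
            ((a p.1:ℚ) + a p.2 - 1)) ^ N := by
    unfold Ofun
    rw [prod_mul_distrib, prod_const]
    ring
  have hP1pos : 0 < ∏ p ∈ univ.filter (fun p : Fin n × Fin n => p.1 < p.2),
      ((a p.2:ℚ) - a p.1) := by
    apply prod_pos
    intro p hp
    simp only [mem_filter] at hp
    have h := hmono hp.2
    have h' : (a p.1 : ℚ) < a p.2 := by exact_mod_cast h
    linarith
  have hP2pos : 0 < ∏ p ∈ univ.filter (fun p : Fin n × Fin n => p.1 ≤ p.2),
      ((a p.1:ℚ) + a p.2 - 1) := by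
    apply prod_pos
    intro p _
    have h1 : (1:ℚ) ≤ (a p.1 : ℚ) := by exact_mod_cast hpos p.1
    have h2 : (1:ℚ) ≤ (a p.2 : ℚ) := by exact_mod_cast hpos p.2
    linarith
  have hQ : (2 ^ (n ^ 2) / ∏ i ∈ range n, (Nat.factorial (2 * i + 1) : ℚ))
        * (∏ p ∈ univ.filter (fun p : Fin n × Fin n => p.1 < p.2), ((a p.2:ℚ) - a p.1))
        * (∏ p ∈ univ.filter (fun p : Fin n × Fin n => p.1 ≤ p.2), ((a p.1:ℚ) + a p.2 - 1))
      = ((2^n * z : ℤ) : ℚ) := by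
    have hP2 : ∏ p ∈ univ.filter (fun p : Fin n × Fin n => p.1 ≤ p.2), ((a p.1:ℚ) + a p.2 - 1)
        = (∏ p ∈ univ.filter (fun p : Fin n × Fin n => p.1 < p.2), ((a p.1:ℚ) + a p.2 - 1))
            * ∏ i : Fin n, (2*(a i:ℚ)-1) := by
      rw [filter_le_split, prod_union (disj_lt_eq n), prod_pairs_diag]
    have hcomb2 : (∏ p ∈ univ.filter (fun p : Fin n × Fin n => p.1 < p.2), ((a p.2:ℚ) - a p.1))
          * (∏ p ∈ univ.filter (fun p : Fin n × Fin n => p.1 < p.2), ((a p.1:ℚ) + a p.2 - 1))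
          * 4^N
        = ∏ i : Fin n, ∏ j ∈ Ioi i, ((2*(a j:ℚ)-1)^2 - (2*(a i:ℚ)-1)^2) := by
      have hstep : ∀ p ∈ univ.filter (fun p : Fin n × Fin n => p.1 < p.2),
          ((a p.2:ℚ) - a p.1) * ((a p.1:ℚ) + a p.2 - 1)
            = ((2*(a p.2:ℚ)-1)^2 - (2*(a p.1:ℚ)-1)^2) * 4⁻¹ := fun p _ => by ring
      have h1 : (∏ p ∈ univ.filter (fun p : Fin n × Fin n => p.1 < p.2), ((a p.2:ℚ) - a p.1))
            * (∏ p ∈ univ.filter (fun p : Fin n × Fin n => p.1 < p.2), ((a p.1:ℚ) + a p.2 - 1))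
          = (∏ i : Fin n, ∏ j ∈ Ioi i, ((2*(a j:ℚ)-1)^2 - (2*(a i:ℚ)-1)^2))
              * (4⁻¹ : ℚ)^N := by
        rw [← prod_mul_distrib, prod_congr rfl hstep, prod_mul_distrib, prod_const,
          ← prod_pairs_lt (fun i j => (2*(a j:ℚ)-1)^2 - (2*(a i:ℚ)-1)^2)]
      rw [h1, inv_pow]
      field_simp
    have hn : n ≤ n*n := by nlinarith
    have hexp : n^2 = n + N * 2 := by
      rw [pow_two, hN, card_pairs_lt n, Nat.add_sub_cancel' hn]
    have hpow : (2:ℚ)^(n^2) = 2^n * 4^N := by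
      rw [hexp, pow_add, mul_comm N 2, pow_mul]
      norm_num
    rw [hP2]
    push_cast
    field_simp
    linear_combination ((2:ℚ)^n * ∏ i : Fin n, (2*(a i:ℚ) - 1)) * hcomb2 + (2:ℚ)^n * hz
      + ((∏ p ∈ univ.filter (fun p : Fin n × Fin n => p.1 < p.2), ((a p.2:ℚ) - a p.1))
          * (∏ p ∈ univ.filter (fun p : Fin n × Fin n => p.1 < p.2), ((a p.1:ℚ) + a p.2 - 1))
          * ∏ i : Fin n, (2*(a i:ℚ) - 1)) * hpow
  set P2n : ℕ := ∏ p ∈ univ.filter (fun p : Fin n × Fin n => p.1 ≤ p.2), (a p.1 + a p.2 - 1)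
    with hP2n
  have hP2cast : ((P2n : ℕ) : ℚ)
      = ∏ p ∈ univ.filter (fun p : Fin n × Fin n => p.1 ≤ p.2), ((a p.1:ℚ) + a p.2 - 1) := by
    rw [hP2n, Nat.cast_prod]
    refine prod_congr rfl fun p _ => ?_
    have h1 : 1 ≤ a p.1 + a p.2 := by have := hpos p.1; omega
    push_cast [Nat.cast_sub h1]
    ring
  have hP2npos : 0 < P2n := by
    apply Finset.prod_pos
    intro p _
    have := hpos p.1
    have := hpos p.2
    omega
  rcases Nat.eq_zero_or_pos N with hN0 | hNpos
  · have hn1 : n ≤ 1 := by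
      have h := card_pairs_lt n
      rw [← hN, hN0] at h
      simp only [Nat.zero_mul] at h
      have hle : n*n ≤ n := Nat.sub_eq_zero_iff_le.mp h.symm
      nlinarith
    rcases (by omega : n = 0 ∨ n = 1) with h0 | h1
    · subst h0
      exact ⟨1, one_pos, by rw [hstruct, hN0]; norm_num⟩
    · subst h1
      refine ⟨2, by norm_num, ?_⟩
      rw [hstruct, hN0]
      have he : (univ.filter (fun p : Fin 1 × Fin 1 => p.1 < p.2)) = ∅ := by decide
      rw [he]
      norm_num [Nat.factorial]
  · have hzpos : (0:ℤ) < 2^n * z := by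
      have h : (0:ℚ) < ((2^n * z : ℤ) : ℚ) := by
        rw [← hQ]
        exact mul_pos (mul_pos (div_pos (by positivity) hFpos) hP1pos) hP2pos
      exact_mod_cast h
    have hKpos : (0:ℤ) < 2^n * z * (P2n:ℤ)^(N-1) :=
      mul_pos hzpos (pow_pos (by exact_mod_cast hP2npos) _)
    refine ⟨(2^n * z * (P2n:ℤ)^(N-1)).toNat, ?_, ?_⟩
    · have h1 : (0:ℤ) < (((2^n * z * (P2n:ℤ)^(N-1)).toNat : ℕ) : ℤ) := by
        rwa [Int.toNat_of_nonneg hKpos.le]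
      exact_mod_cast h1
    · rw [hstruct]
      have hNsplit : (∏ p ∈ univ.filter (fun p : Fin n × Fin n => p.1 ≤ p.2),
            ((a p.1:ℚ) + a p.2 - 1)) ^ N
          = (∏ p ∈ univ.filter (fun p : Fin n × Fin n => p.1 ≤ p.2), ((a p.1:ℚ) + a p.2 - 1))
            * (∏ p ∈ univ.filter (fun p : Fin n × Fin n => p.1 ≤ p.2),
                ((a p.1:ℚ) + a p.2 - 1)) ^ (N-1) := by
        rw [← pow_succ']
        congr 1
        omega
      rw [hNsplit]
      have hcst : (((2^n * z * (P2n:ℤ)^(N-1)).toNat : ℕ) : ℚ)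
          = (((2^n * z * (P2n:ℤ)^(N-1)) : ℤ) : ℚ) := by
        exact_mod_cast congrArg (fun t : ℤ => (t:ℚ)) (Int.toNat_of_nonneg hKpos.le)
      rw [hcst]
      push_cast
      rw [hP2cast]
      push_cast at hQ
      linear_combination ((∏ p ∈ univ.filter (fun p : Fin n × Fin n => p.1 ≤ p.2),
        ((a p.1:ℚ) + a p.2 - 1))^(N-1)) * hQ
end

section
/- For any strictly increasing sequence of positive integers a_1 < a_2 < ... < a_n, the quantity 2^{-n} · Ē(a_1,...,a_n), where Ē(a_1,...,a_n) = 2^{n^2}·(∏_{i=1}^n a_i) / (0!·2!·4!···(2n-2)!) · ∏_{1≤i<j≤n}(a_j - a_i) · ∏_{1≤i≤j≤n}(a_i + a_j), is a positive integer. -/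
open Finset
open Polynomial

/-- The function `Ē(a_1,...,a_n)` of the paper. -/
noncomputable def Ebar (n : ℕ) (a : Fin n → ℕ) : ℚ :=
  (2 ^ (n ^ 2) * (∏ i : Fin n, (a i : ℚ)) / ∏ i ∈ Finset.range n, (Nat.factorial (2 * i) : ℚ))
    * ∏ p ∈ Finset.univ.filter (fun p : Fin n × Fin n => p.1 < p.2), ((a p.2 : ℚ) - (a p.1 : ℚ))
    * ∏ p ∈ Finset.univ.filter (fun p : Fin n × Fin n => p.1 ≤ p.2),
        ((a p.1 : ℚ) + (a p.2 : ℚ))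


lemma factorial_dvd_descPochhammer_eval (m : ℕ) (x : ℤ) :
    (m.factorial : ℤ) ∣ (descPochhammer ℤ m).eval x := by
  rcases le_or_gt 0 x with hx | hx
  · lift x to ℕ using hx
    rw [descPochhammer_eval_eq_descFactorial]
    exact_mod_cast Nat.factorial_dvd_descFactorial x m
  · have h := ascPochhammer_eval_neg_eq_descPochhammer (R := ℤ) x m
    have h2 : (descPochhammer ℤ m).eval x = (-1) ^ m * (ascPochhammer ℤ m).eval (-x) := by
      rw [h, ← mul_assoc, ← mul_pow, neg_mul_neg, one_mul, one_pow, one_mul]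
    rw [h2]
    apply Dvd.dvd.mul_left
    have hx' : 0 ≤ -x := by omega
    lift -x to ℕ using hx' with y hy
    rw [← ascPochhammer_eval_cast, ascPochhammer_nat_eq_ascFactorial]
    exact_mod_cast Nat.factorial_dvd_ascFactorial y m

lemma descPochhammer_succ_eval' (n : ℕ) (r : ℤ) :
    (descPochhammer ℤ (n + 1)).eval r = r * (descPochhammer ℤ n).eval (r - 1) := by
  rw [descPochhammer_succ_left]
  simp [eval_comp]

lemma odd_prod_eq_descPochhammer (a : ℤ) :
    ∀ j : ℕ, a * ∏ t ∈ range j, (a ^ 2 - ((t : ℤ) + 1) ^ 2)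
      = (descPochhammer ℤ (2 * j + 1)).eval (a + j) := by
  intro j
  induction j with
  | zero => simp [descPochhammer_one]
  | succ j ih =>
    have e1 : 2 * (j + 1) + 1 = (2 * j + 1 + 1) + 1 := by ring
    rw [e1, descPochhammer_succ_eval' (2 * j + 1 + 1) (a + (j+1 : ℕ)),
      descPochhammer_succ_eval]
    push_cast
    have : a + ((j : ℤ) + 1) - 1 = a + j := by ring
    rw [this]
    push_cast at ih
    rw [prod_range_succ, ← ih]
    ring

lemma prod_dvd_det {n : ℕ} (c : Fin n → ℤ) (M : Matrix (Fin n) (Fin n) ℤ)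
    (h : ∀ i j, c j ∣ M i j) : (∏ j, c j) ∣ M.det := by
  rw [Matrix.det_apply]
  refine Finset.dvd_sum fun σ _ => ?_
  have hd : (∏ j, c j) ∣ ∏ j, M (σ j) j :=
    Finset.prod_dvd_prod_of_dvd _ _ (fun j _ => h (σ j) j)
  rcases Int.units_eq_one_or (Equiv.Perm.sign σ) with hs | hs <;>
    simp [hs, Units.smul_def, hd, (hd.neg_right)]

lemma key_dvd (n : ℕ) (b : Fin n → ℤ) :
    (∏ j : Fin n, ((2 * (j : ℕ) + 1).factorial : ℤ)) ∣
      (∏ i, b i) * (Matrix.vandermonde fun i => b i ^ 2).det := by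
  set q : Fin n → ℤ[X] := fun j => ∏ t ∈ range (j : ℕ), (X - C (((t : ℤ) + 1) ^ 2)) with hq
  have hmonic : ∀ j, (q j).Monic := fun j => monic_prod_of_monic _ _ fun t _ => monic_X_sub_C _
  have hdeg : ∀ j, (q j).natDegree = (j : ℕ) := by
    intro j
    rw [hq]
    rw [natDegree_prod_of_monic _ _ (fun t _ => monic_X_sub_C _)]
    simp only [natDegree_X_sub_C, Finset.sum_const, smul_eq_mul, mul_one, card_range]
  have hvand := Matrix.det_eval_matrixOfPolynomials_eq_det_vandermonde
    (fun i => b i ^ 2) q hdeg hmonic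
  have hcol := Matrix.det_mul_column (fun i => b i)
    (Matrix.of fun i j => (q j).eval (b i ^ 2))
  have hentry : ∀ i j : Fin n, ((2 * (j : ℕ) + 1).factorial : ℤ) ∣
      (Matrix.of fun i j => b i * (q j).eval (b i ^ 2)) i j := by
    intro i j
    have : (q j).eval (b i ^ 2) = ∏ t ∈ range (j : ℕ), (b i ^ 2 - ((t : ℤ) + 1) ^ 2) := by
      simp [hq, eval_prod]
    simp only [Matrix.of_apply, this]
    rw [odd_prod_eq_descPochhammer]
    exact factorial_dvd_descPochhammer_eval _ _
  have := prod_dvd_det (fun j : Fin n => ((2 * (j : ℕ) + 1).factorial : ℤ)) _ hentry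
  rwa [show (Matrix.of fun i j => b i * (q j).eval (b i ^ 2))
      = Matrix.of fun i j => (fun i => b i) i * (Matrix.of fun i j => (q j).eval (b i ^ 2)) i j
      from rfl, hcol, ← hvand] at this

lemma prod_filter_lt_eq {M : Type*} [CommMonoid M] {n : ℕ} (f : Fin n → Fin n → M) :
    ∏ p ∈ univ.filter (fun p : Fin n × Fin n => p.1 < p.2), f p.1 p.2
      = ∏ i, ∏ j ∈ Ioi i, f i j := by
  rw [Finset.prod_filter, ← Finset.univ_product_univ, Finset.prod_product]
  refine Finset.prod_congr rfl fun i _ => ?_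
  rw [← Finset.prod_filter, Finset.filter_lt_eq_Ioi]

lemma prod_filter_le_eq {M : Type*} [CommMonoid M] {n : ℕ} (f : Fin n → Fin n → M) :
    ∏ p ∈ univ.filter (fun p : Fin n × Fin n => p.1 ≤ p.2), f p.1 p.2
      = ∏ i, ∏ j ∈ Ici i, f i j := by
  rw [Finset.prod_filter, ← Finset.univ_product_univ, Finset.prod_product]
  refine Finset.prod_congr rfl fun i _ => ?_
  rw [← Finset.prod_filter, Finset.filter_le_eq_Ici]
theorem Ebar_div_pow_pos_int (n : ℕ) (a : Fin n → ℕ) (hpos : ∀ i, 0 < a i)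
    (hmono : StrictMono a) :
    ∃ k : ℕ, 0 < k ∧ Ebar n a / 2 ^ n = (k : ℚ) := by
  by_cases hn : n < 2
  · interval_cases n
    · exact ⟨1, one_pos, by norm_num [Ebar]⟩
    · refine ⟨a 0, hpos 0, ?_⟩
      have he : (univ.filter (fun p : Fin 1 × Fin 1 => p.1 < p.2)) = ∅ := by decide
      rw [Ebar, he]
      simp
  · push_neg at hn
    set P : ℤ := ∏ i, (a i : ℤ) with hP
    set D : ℤ := (Matrix.vandermonde fun i => (a i : ℤ) ^ 2).det with hDdef
    set F : ℤ := ∏ i ∈ range n, ((2 * i).factorial : ℤ) with hF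
    set Wo : ℤ := ∏ i, ∏ j ∈ Ioi i, ((a i : ℤ) + (a j : ℤ)) with hWo
    set N : ℕ := (univ.filter (fun p : Fin n × Fin n => p.1 < p.2)).card with hN
    have hD : D = ∏ i, ∏ j ∈ Ioi i, ((a j : ℤ) ^ 2 - (a i : ℤ) ^ 2) :=
      Matrix.det_vandermonde _
    -- divisibility
    have h1 : (∏ j : Fin n, ((2 * (j : ℕ) + 1).factorial : ℤ)) ∣ P * D :=
      key_dvd n fun i => (a i : ℤ)
    have h2 : F ∣ ∏ j : Fin n, ((2 * (j : ℕ) + 1).factorial : ℤ) := by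
      rw [hF, ← Fin.prod_univ_eq_prod_range (fun i => ((2 * i).factorial : ℤ))]
      exact Finset.prod_dvd_prod_of_dvd _ _ fun j _ => by
        exact_mod_cast Nat.factorial_dvd_factorial (Nat.le_succ _)
    obtain ⟨m, hm⟩ : F ∣ P * D := h2.trans h1
    -- positivity
    have hPpos : 0 < P := Finset.prod_pos fun i _ => by exact_mod_cast hpos i
    have hDpos : 0 < D := by
      rw [hD]
      refine Finset.prod_pos fun i _ => Finset.prod_pos fun j hj => ?_
      have hij : a i < a j := hmono (Finset.mem_Ioi.mp hj)
      have h0 : (0:ℤ) ≤ (a i : ℤ) := by positivity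
      nlinarith [show (a i : ℤ) < (a j : ℤ) by exact_mod_cast hij]
    have hFpos : 0 < F := Finset.prod_pos fun i _ => by
      exact_mod_cast Nat.factorial_pos _
    have hWopos : 0 < Wo := Finset.prod_pos fun i _ => Finset.prod_pos fun j _ => by
      have := hpos i; have := hpos j; positivity
    have hmpos : 0 < m := by nlinarith [mul_pos hPpos hDpos]
    -- N positive
    have hNpos : 0 < N := by
      rw [hN, Finset.card_pos]
      refine ⟨((⟨0, by omega⟩ : Fin n), (⟨1, by omega⟩ : Fin n)), ?_⟩
      simp [Finset.mem_filter, Fin.mk_lt_mk]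
    obtain ⟨N', hN'⟩ := Nat.exists_eq_succ_of_ne_zero hNpos.ne'
    set v : ℤ := 2 ^ (n ^ 2) * P * m * (2 ^ n * P * Wo) ^ N' with hv
    have hvpos : 0 < v := by positivity
    refine ⟨v.toNat, by omega, ?_⟩
    have hkq : ((v.toNat : ℕ) : ℚ) = (v : ℚ) := by
      rw [← Int.cast_natCast, Int.toNat_of_nonneg hvpos.le]
    rw [hkq]
    -- cast facts
    have hPq : ((P : ℤ) : ℚ) = ∏ i, (a i : ℚ) := by rw [hP]; push_cast; rfl
    have hFq : ((F : ℤ) : ℚ) = ∏ i ∈ range n, ((2 * i).factorial : ℚ) := by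
      rw [hF]; push_cast; rfl
    have hFq0 : (∏ i ∈ range n, ((2 * i).factorial : ℚ)) ≠ 0 := by positivity
    have hDq : ((D : ℤ) : ℚ) = ∏ i, ∏ j ∈ Ioi i, ((a j : ℚ) ^ 2 - (a i : ℚ) ^ 2) := by
      rw [hD]; push_cast; rfl
    have hWoq : ((Wo : ℤ) : ℚ) = ∏ i, ∏ j ∈ Ioi i, ((a i : ℚ) + (a j : ℚ)) := by
      rw [hWo]; push_cast; rfl
    have hmq : ((P : ℤ) : ℚ) * ((D : ℤ) : ℚ) = ((F : ℤ) : ℚ) * ((m : ℤ) : ℚ) := by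
      exact_mod_cast congrArg (fun z : ℤ => (z : ℚ)) hm
    rw [hPq, hFq, hDq] at hmq
    -- product identities over ℚ
    have hVW : (∏ i, ∏ j ∈ Ioi i, ((a j : ℚ) - (a i : ℚ)))
        * (∏ i, ∏ j ∈ Ioi i, ((a i : ℚ) + (a j : ℚ)))
        = ∏ i, ∏ j ∈ Ioi i, ((a j : ℚ) ^ 2 - (a i : ℚ) ^ 2) := by
      rw [← Finset.prod_mul_distrib]
      refine Finset.prod_congr rfl fun i _ => ?_
      rw [← Finset.prod_mul_distrib]
      exact Finset.prod_congr rfl fun j _ => by ring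
    have hIci : (∏ i, ∏ j ∈ Ici i, ((a i : ℚ) + (a j : ℚ)))
        = 2 ^ n * (∏ i, (a i : ℚ)) * ∏ i, ∏ j ∈ Ioi i, ((a i : ℚ) + (a j : ℚ)) := by
      have h3 : ∀ i : Fin n, ∏ j ∈ Ici i, ((a i : ℚ) + (a j : ℚ))
          = (2 * (a i : ℚ)) * ∏ j ∈ Ioi i, ((a i : ℚ) + (a j : ℚ)) := by
        intro i
        rw [Finset.Ici_eq_cons_Ioi, Finset.prod_cons]
        ring
      rw [Finset.prod_congr rfl fun i _ => h3 i, Finset.prod_mul_distrib,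
        Finset.prod_mul_distrib, Finset.prod_const, Finset.card_univ, Fintype.card_fin]
    -- unfold Ebar
    rw [Ebar, Finset.prod_mul_distrib, Finset.prod_const, ← hN,
      prod_filter_lt_eq (fun i j => (a j : ℚ) - (a i : ℚ)),
      prod_filter_le_eq (fun i j => (a i : ℚ) + (a j : ℚ)), hIci, hN']
    rw [hv]
    push_cast
    rw [hPq, hWoq]
    rw [div_mul_eq_mul_div, div_div,
      div_eq_iff (mul_ne_zero hFq0 (by positivity : ((2:ℚ)^n) ≠ 0))]
    simp only [Nat.succ_eq_add_one]
    set Vq : ℚ := ∏ i, ∏ j ∈ Ioi i, ((a j : ℚ) - (a i : ℚ))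
    set Woq : ℚ := ∏ i, ∏ j ∈ Ioi i, ((a i : ℚ) + (a j : ℚ))
    set Pq : ℚ := ∏ i, (a i : ℚ)
    set Fq : ℚ := ∏ i ∈ range n, ((2 * i).factorial : ℚ)
    rw [← hVW] at hmq
    linear_combination
      (2 ^ (n ^ 2) * Pq * (2 ^ n * Pq * Woq) ^ N' * 2 ^ n) * hmq
end

section
/- Let G be a finite weighted graph containing a 7-vertex subgraph H consisting of two 4-cycles sharing a common vertex a, with 4-cycles a, b_1, b_2, b_3 and a, c_1, c_2, c_3 (in cyclic order), such that b_3 and c_3 are the only vertices of H having neighbors outside H, and such that in each 4-cycle the products of the weights of opposite edges are equal. Let G' be the graph obtained from G by deleting b_1, b_2, c_1, c_2 (with edge weights restricted). Then M(G) = 2 · wt(b_1 b_2) · wt(c_1 c_2) · M(G'), where M denotes the weighted count of perfect matchings. -/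
open Finset
open scoped Classical

/-- `M` is a perfect matching of `G`. -/
def SimpleGraph.IsPM {V : Type} (G : SimpleGraph V) (M : Finset (Sym2 V)) : Prop :=
  (∀ e ∈ M, e ∈ G.edgeSet) ∧ ∀ v : V, ∃! e, e ∈ M ∧ v ∈ e

/-- The weighted count of perfect matchings of `G`. -/
noncomputable def matchSum {V : Type} [Fintype V] [DecidableEq V]
    (G : SimpleGraph V) (wt : Sym2 V → ℚ) : ℚ :=
  ∑ M ∈ Finset.univ.filter (fun M : Finset (Sym2 V) => G.IsPM M), ∏ e ∈ M, wt e

namespace CiucuAux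
set_option linter.unusedSectionVars false

variable {V : Type} [Fintype V] [DecidableEq V]

/-- A perfect matching on the vertex subset `S` of `G`. -/
def PMon (G : SimpleGraph V) (S : Set V) (M : Finset (Sym2 V)) : Prop :=
  (∀ e ∈ M, e ∈ G.edgeSet) ∧ (∀ e ∈ M, ∀ v ∈ e, v ∈ S) ∧ ∀ v ∈ S, ∃! e, e ∈ M ∧ v ∈ e

lemma isPM_unique {G : SimpleGraph V} {M : Finset (Sym2 V)} (h : G.IsPM M)
    {e f : Sym2 V} {v : V} (he : e ∈ M) (hf : f ∈ M) (hve : v ∈ e) (hvf : v ∈ f) :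
    e = f := by
  obtain ⟨g, -, hg⟩ := h.2 v
  rw [hg e ⟨he, hve⟩, hg f ⟨hf, hvf⟩]

lemma pmon_unique {G : SimpleGraph V} {S : Set V} {M : Finset (Sym2 V)} (h : PMon G S M)
    {e f : Sym2 V} {v : V} (hv : v ∈ S) (he : e ∈ M) (hf : f ∈ M) (hve : v ∈ e) (hvf : v ∈ f) :
    e = f := by
  obtain ⟨g, -, hg⟩ := h.2.2 v hv
  rw [hg e ⟨he, hve⟩, hg f ⟨hf, hvf⟩]

lemma edge_shape {G : SimpleGraph V} {e : Sym2 V} {v : V}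
    (he : e ∈ G.edgeSet) (hv : v ∈ e) : ∃ w, e = s(v, w) ∧ G.Adj v w := by
  induction e using Sym2.ind with
  | _ x y =>
    rw [Sym2.mem_iff] at hv
    rw [SimpleGraph.mem_edgeSet] at he
    rcases hv with rfl | rfl
    · exact ⟨y, rfl, he⟩
    · exact ⟨x, Sym2.eq_swap, he.symm⟩

lemma isPM_edge_at {G : SimpleGraph V} {M : Finset (Sym2 V)} (h : G.IsPM M) (v : V) :
    ∃ w, s(v, w) ∈ M ∧ G.Adj v w := by
  obtain ⟨e, ⟨heM, hve⟩, -⟩ := h.2 v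
  obtain ⟨w, rfl, hadj⟩ := edge_shape (h.1 e heM) hve
  exact ⟨w, heM, hadj⟩

lemma pmon_edge_at {G : SimpleGraph V} {S : Set V} {M : Finset (Sym2 V)} (h : PMon G S M)
    {v : V} (hv : v ∈ S) : ∃ w, s(v, w) ∈ M ∧ G.Adj v w ∧ w ∈ S := by
  obtain ⟨e, ⟨heM, hve⟩, -⟩ := h.2.2 v hv
  obtain ⟨w, rfl, hadj⟩ := edge_shape (h.1 e heM) hve
  exact ⟨w, heM, hadj, h.2.1 _ heM w (by simp)⟩

/-- Matchings of the induced subgraph correspond to matchings on `S`. -/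
lemma matchSum_induce (G : SimpleGraph V) (wt : Sym2 V → ℚ) (S : Set V)
    [Fintype ↥S] [DecidableEq ↥S] :
    matchSum (G.induce S) (fun f => wt (Sym2.map Subtype.val f))
      = ∑ N ∈ Finset.univ.filter (fun N : Finset (Sym2 V) => PMon G S N),
          ∏ e ∈ N, wt e := by
  have hinj : Function.Injective (Sym2.map (Subtype.val : S → V)) :=
    Sym2.map.injective Subtype.val_injective
  rw [matchSum]
  refine Finset.sum_nbij' (fun M => M.image (Sym2.map Subtype.val))
    (fun N => Finset.univ.filter (fun f : Sym2 S => Sym2.map Subtype.val f ∈ N))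
    ?_ ?_ ?_ ?_ ?_
  · -- forward map lands in target
    intro M hM
    rw [mem_filter] at hM ⊢
    obtain ⟨-, hM⟩ := hM
    refine ⟨mem_univ _, ?_, ?_, ?_⟩
    · intro e he
      rw [Finset.mem_image] at he
      obtain ⟨f, hf, rfl⟩ := he
      have := hM.1 f hf
      induction f using Sym2.ind with
      | _ x y =>
        rw [SimpleGraph.mem_edgeSet] at this
        rw [Sym2.map_pair_eq, SimpleGraph.mem_edgeSet]
        exact this
    · intro e he v hv
      rw [Finset.mem_image] at he
      obtain ⟨f, hf, rfl⟩ := he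
      rw [Sym2.mem_map] at hv
      obtain ⟨u, -, rfl⟩ := hv
      exact u.2
    · intro v hv
      obtain ⟨f, ⟨hfM, hvf⟩, huniq⟩ := hM.2 ⟨v, hv⟩
      refine ⟨Sym2.map Subtype.val f, ⟨Finset.mem_image_of_mem _ hfM, ?_⟩, ?_⟩
      · rw [Sym2.mem_map]; exact ⟨⟨v, hv⟩, hvf, rfl⟩
      · rintro e ⟨heM, hve⟩
        rw [Finset.mem_image] at heM
        obtain ⟨g, hg, rfl⟩ := heM
        rw [Sym2.mem_map] at hve
        obtain ⟨u, hu, huv⟩ := hve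
        have : u = ⟨v, hv⟩ := Subtype.ext huv
        subst this
        rw [huniq g ⟨hg, hu⟩]
  · -- backward map lands in source
    intro N hN
    rw [mem_filter] at hN ⊢
    obtain ⟨-, hN⟩ := hN
    refine ⟨mem_univ _, ?_, ?_⟩
    · intro f hf
      rw [mem_filter] at hf
      have := hN.1 _ hf.2
      induction f using Sym2.ind with
      | _ x y =>
        rw [Sym2.map_pair_eq, SimpleGraph.mem_edgeSet] at this
        rw [SimpleGraph.mem_edgeSet]
        exact SimpleGraph.comap_adj.mpr this
    · intro u
      obtain ⟨w, hwN, hadj, hwS⟩ := pmon_edge_at hN u.2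
      refine ⟨s(u, ⟨w, hwS⟩), ⟨?_, by simp⟩, ?_⟩
      · rw [mem_filter]
        exact ⟨mem_univ _, by rw [Sym2.map_pair_eq]; exact hwN⟩
      · rintro f ⟨hfN, huf⟩
        rw [mem_filter] at hfN
        refine hinj ?_
        rw [Sym2.map_pair_eq]
        refine pmon_unique hN u.2 hfN.2 hwN ?_ (by simp)
        rw [Sym2.mem_map]
        exact ⟨u, huf, rfl⟩
  · -- left inverse
    intro M hM
    ext f
    rw [mem_filter]
    simp only [mem_univ, true_and]
    constructor
    · intro h
      rw [Finset.mem_image] at h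
      obtain ⟨g, hg, hgf⟩ := h
      rwa [hinj hgf] at hg
    · intro h
      exact Finset.mem_image_of_mem _ h
  · -- right inverse
    intro N hN
    rw [mem_filter] at hN
    obtain ⟨-, hN⟩ := hN
    ext e
    rw [Finset.mem_image]
    constructor
    · rintro ⟨f, hf, rfl⟩
      rw [mem_filter] at hf
      exact hf.2
    · intro he
      have hsup := hN.2.1 e he
      induction e using Sym2.ind with
      | _ x y =>
        have hx : x ∈ S := hsup x (by simp)
        have hy : y ∈ S := hsup y (by simp)
        refine ⟨s(⟨x, hx⟩, ⟨y, hy⟩), ?_, by rw [Sym2.map_pair_eq]⟩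
        rw [mem_filter, Sym2.map_pair_eq]
        exact ⟨mem_univ _, he⟩
  · -- sums agree
    intro M hM
    rw [Finset.prod_image]
    intro x hx y hy hxy
    exact hinj hxy


lemma side_far (G : SimpleGraph V) (wt : Sym2 V → ℚ)
    (a b1 b2 b3 c1 c2 : V) (S : Set V)
    (hS : ∀ v, v ∈ S ↔ ¬(v = b1 ∨ v = b2 ∨ v = c1 ∨ v = c2))
    (hb12 : G.Adj b1 b2) (hc12 : G.Adj c1 c2)
    (hNb1 : ∀ w, G.Adj b1 w → w = a ∨ w = b2)
    (hNc1 : ∀ w, G.Adj c1 w → w = a ∨ w = c2)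
    (nab1 : a ≠ b1) (nab2 : a ≠ b2) (nac1 : a ≠ c1) (nac2 : a ≠ c2)
    (nb13 : b1 ≠ b3) (nb23 : b2 ≠ b3) (nc1b3 : c1 ≠ b3) (nc2b3 : c2 ≠ b3)
    (nb1c1 : b1 ≠ c1) (nb1c2 : b1 ≠ c2) (nb2c1 : b2 ≠ c1) (nb2c2 : b2 ≠ c2) :
    (∑ M ∈ Finset.univ.filter
        (fun M : Finset (Sym2 V) => G.IsPM M ∧ s(a, b3) ∈ M), ∏ e ∈ M, wt e)
      = wt s(b1, b2) * wt s(c1, c2) *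
        ∑ N ∈ Finset.univ.filter
          (fun N : Finset (Sym2 V) => PMon G S N ∧ s(a, b3) ∈ N), ∏ e ∈ N, wt e := by
  have haS : a ∈ S := by rw [hS]; push_neg; exact ⟨nab1, nab2, nac1, nac2⟩
  have hb3S : b3 ∈ S := by
    rw [hS]; push_neg
    exact ⟨fun h => nb13 h.symm, fun h => nb23 h.symm, fun h => nc1b3 h.symm,
      fun h => nc2b3 h.symm⟩
  have hbb_ne_cc : s(b1, b2) ≠ s(c1, c2) := by
    intro h; rw [Sym2.eq_iff] at h; tauto
  have hab3_ne_bb : s(a, b3) ≠ s(b1, b2) := by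
    intro h; rw [Sym2.eq_iff] at h; tauto
  have hab3_ne_cc : s(a, b3) ≠ s(c1, c2) := by
    intro h; rw [Sym2.eq_iff] at h; tauto
  have key : ∀ M : Finset (Sym2 V), G.IsPM M → s(a, b3) ∈ M →
      s(b1, b2) ∈ M ∧ s(c1, c2) ∈ M := by
    intro M hM hab3
    constructor
    · obtain ⟨w, hwM, hadj⟩ := isPM_edge_at hM b1
      rcases hNb1 w hadj with hw | hw
      · rw [hw] at hwM
        exfalso
        have := isPM_unique (v := a) hM hwM hab3 (by simp) (by simp)
        rw [Sym2.eq_iff] at this; tauto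
      · rw [hw] at hwM; exact hwM
    · obtain ⟨w, hwM, hadj⟩ := isPM_edge_at hM c1
      rcases hNc1 w hadj with hw | hw
      · rw [hw] at hwM
        exfalso
        have := isPM_unique (v := a) hM hwM hab3 (by simp) (by simp)
        rw [Sym2.eq_iff] at this; tauto
      · rw [hw] at hwM; exact hwM
  rw [Finset.mul_sum]
  refine Finset.sum_nbij' (fun M => M \ {s(b1, b2), s(c1, c2)})
      (fun N => N ∪ {s(b1, b2), s(c1, c2)}) ?_ ?_ ?_ ?_ ?_
  · -- forward lands in target
    intro M hM
    rw [mem_filter] at hM ⊢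
    obtain ⟨-, hM, hab3⟩ := hM
    obtain ⟨hbb, hcc⟩ := key M hM hab3
    refine ⟨mem_univ _, ⟨?_, ?_, ?_⟩, ?_⟩
    · intro e he
      rw [mem_sdiff] at he
      exact hM.1 e he.1
    · intro e he v hv
      rw [mem_sdiff, mem_insert, mem_singleton] at he
      push_neg at he
      obtain ⟨heM, h1, h2⟩ := he
      rw [hS]
      rintro (rfl | rfl | rfl | rfl)
      · exact h1 (isPM_unique hM heM hbb hv (by simp))
      · exact h1 (isPM_unique hM heM hbb hv (by simp))
      · exact h2 (isPM_unique hM heM hcc hv (by simp))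
      · exact h2 (isPM_unique hM heM hcc hv (by simp))
    · intro v hv
      obtain ⟨e, ⟨heM, hve⟩, hu⟩ := hM.2 v
      have he1 : e ≠ s(b1, b2) := by
        rintro rfl
        rw [Sym2.mem_iff] at hve
        rw [hS] at hv; tauto
      have he2 : e ≠ s(c1, c2) := by
        rintro rfl
        rw [Sym2.mem_iff] at hve
        rw [hS] at hv; tauto
      refine ⟨e, ⟨?_, hve⟩, ?_⟩
      · rw [mem_sdiff, mem_insert, mem_singleton]; tauto
      · rintro f ⟨hf, hvf⟩
        rw [mem_sdiff] at hf
        exact hu f ⟨hf.1, hvf⟩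
    · rw [mem_sdiff, mem_insert, mem_singleton]
      exact ⟨hab3, by tauto⟩
  · -- backward lands in source
    intro N hN
    rw [mem_filter] at hN ⊢
    obtain ⟨-, hN, hab3⟩ := hN
    have hb1S : b1 ∉ S := by rw [hS]; tauto
    have hb2S : b2 ∉ S := by rw [hS]; tauto
    have hc1S : c1 ∉ S := by rw [hS]; tauto
    have hc2S : c2 ∉ S := by rw [hS]; tauto
    refine ⟨mem_univ _, ⟨?_, ?_⟩, ?_⟩
    · intro e he
      rw [mem_union, mem_insert, mem_singleton] at he
      rcases he with he | rfl | rfl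
      · exact hN.1 e he
      · exact G.mem_edgeSet.mpr hb12
      · exact G.mem_edgeSet.mpr hc12
    · intro v
      by_cases hv : v ∈ S
      · obtain ⟨e, ⟨heN, hve⟩, hu⟩ := hN.2.2 v hv
        refine ⟨e, ⟨mem_union_left _ heN, hve⟩, ?_⟩
        rintro f ⟨hf, hvf⟩
        rw [mem_union, mem_insert, mem_singleton] at hf
        rcases hf with hf | rfl | rfl
        · exact hu f ⟨hf, hvf⟩
        · rw [Sym2.mem_iff] at hvf
          rcases hvf with rfl | rfl
          · exact absurd hv hb1S
          · exact absurd hv hb2S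
        · rw [Sym2.mem_iff] at hvf
          rcases hvf with rfl | rfl
          · exact absurd hv hc1S
          · exact absurd hv hc2S
      · have hv4 : v = b1 ∨ v = b2 ∨ v = c1 ∨ v = c2 := by
          by_contra h; exact hv ((hS v).mpr h)
        have main : ∀ f ∈ N ∪ {s(b1, b2), s(c1, c2)}, v ∈ f →
            (f = s(b1, b2) ∨ f = s(c1, c2)) := by
          intro f hf hvf
          rw [mem_union, mem_insert, mem_singleton] at hf
          rcases hf with hf | rfl | rfl
          · exfalso
            have := hN.2.1 f hf v hvf
            exact hv this
          · tauto
          · tauto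
        rcases hv4 with hv4 | hv4 | hv4 | hv4
        · refine ⟨s(b1, b2), ⟨by rw [mem_union, mem_insert]; tauto,
            by rw [Sym2.mem_iff]; tauto⟩, ?_⟩
          rintro f ⟨hf, hvf⟩
          rcases main f hf hvf with h | h
          · exact h
          · exfalso
            rw [h, Sym2.mem_iff] at hvf
            rcases hvf with h' | h'
            · exact nb1c1 (hv4.symm.trans h')
            · exact nb1c2 (hv4.symm.trans h')
        · refine ⟨s(b1, b2), ⟨by rw [mem_union, mem_insert]; tauto,
            by rw [Sym2.mem_iff]; tauto⟩, ?_⟩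
          rintro f ⟨hf, hvf⟩
          rcases main f hf hvf with h | h
          · exact h
          · exfalso
            rw [h, Sym2.mem_iff] at hvf
            rcases hvf with h' | h'
            · exact nb2c1 (hv4.symm.trans h')
            · exact nb2c2 (hv4.symm.trans h')
        · refine ⟨s(c1, c2), ⟨by rw [mem_union, mem_insert, mem_singleton]; tauto,
            by rw [Sym2.mem_iff]; tauto⟩, ?_⟩
          rintro f ⟨hf, hvf⟩
          rcases main f hf hvf with h | h
          · exfalso
            rw [h, Sym2.mem_iff] at hvf
            rcases hvf with h' | h'
            · exact nb1c1 (h'.symm.trans hv4)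
            · exact nb2c1 (h'.symm.trans hv4)
          · exact h
        · refine ⟨s(c1, c2), ⟨by rw [mem_union, mem_insert, mem_singleton]; tauto,
            by rw [Sym2.mem_iff]; tauto⟩, ?_⟩
          rintro f ⟨hf, hvf⟩
          rcases main f hf hvf with h | h
          · exfalso
            rw [h, Sym2.mem_iff] at hvf
            rcases hvf with h' | h'
            · exact nb1c2 (h'.symm.trans hv4)
            · exact nb2c2 (h'.symm.trans hv4)
          · exact h
    · exact mem_union_left _ hab3
  · -- left inverse
    intro M hM
    rw [mem_filter] at hM
    obtain ⟨-, hM, hab3⟩ := hM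
    obtain ⟨hbb, hcc⟩ := key M hM hab3
    exact Finset.sdiff_union_of_subset (by
      rw [Finset.insert_subset_iff, Finset.singleton_subset_iff]; exact ⟨hbb, hcc⟩)
  · -- right inverse
    intro N hN
    rw [mem_filter] at hN
    obtain ⟨-, hN, -⟩ := hN
    have hbbN : s(b1, b2) ∉ N := by
      intro h
      have := hN.2.1 _ h b1 (by simp)
      rw [hS] at this; tauto
    have hccN : s(c1, c2) ∉ N := by
      intro h
      have := hN.2.1 _ h c1 (by simp)
      rw [hS] at this; tauto
    ext e
    rw [mem_sdiff, mem_union]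
    constructor
    · rintro ⟨he | he, hne⟩
      · exact he
      · exact absurd he hne
    · intro he
      refine ⟨Or.inl he, ?_⟩
      rw [mem_insert, mem_singleton]
      rintro (rfl | rfl)
      · exact hbbN he
      · exact hccN he
  · -- weights
    intro M hM
    rw [mem_filter] at hM
    obtain ⟨-, hM, hab3⟩ := hM
    obtain ⟨hbb, hcc⟩ := key M hM hab3
    have hMeq : M = insert s(b1, b2) (insert s(c1, c2) (M \ {s(b1, b2), s(c1, c2)})) := by
      ext e
      rw [mem_insert, mem_insert, mem_sdiff, mem_insert, mem_singleton]
      constructor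
      · intro he
        by_cases h1 : e = s(b1, b2)
        · tauto
        by_cases h2 : e = s(c1, c2)
        · tauto
        · exact Or.inr (Or.inr ⟨he, by tauto⟩)
      · rintro (rfl | rfl | ⟨he, -⟩) <;> assumption
    conv_lhs => rw [hMeq]
    rw [Finset.prod_insert (by simp [hbb_ne_cc]), Finset.prod_insert (by simp)]
    ring

set_option maxHeartbeats 2000000 in
lemma side_near (G : SimpleGraph V) (wt : Sym2 V → ℚ)
    (a b1 b2 b3 c1 c2 : V) (S : Set V)
    (hS : ∀ v, v ∈ S ↔ ¬(v = b1 ∨ v = b2 ∨ v = c1 ∨ v = c2))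
    (hab1 : G.Adj a b1) (hb23 : G.Adj b2 b3) (hc12 : G.Adj c1 c2) (hb3a : G.Adj b3 a)
    (hNb2 : ∀ w, G.Adj b2 w → w = b1 ∨ w = b3)
    (hNc1 : ∀ w, G.Adj c1 w → w = a ∨ w = c2)
    (hwb : wt s(a, b1) * wt s(b2, b3) = wt s(b1, b2) * wt s(b3, a))
    (nab1 : a ≠ b1) (nab2 : a ≠ b2) (nab3 : a ≠ b3) (nac1 : a ≠ c1) (nac2 : a ≠ c2)
    (nb12 : b1 ≠ b2) (nb13 : b1 ≠ b3) (nb23 : b2 ≠ b3)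
    (nb1c1 : b1 ≠ c1) (nb1c2 : b1 ≠ c2) (nb2c1 : b2 ≠ c1) (nb2c2 : b2 ≠ c2)
    (nc1b3 : c1 ≠ b3) (nc2b3 : c2 ≠ b3) :
    (∑ M ∈ Finset.univ.filter
        (fun M : Finset (Sym2 V) => G.IsPM M ∧ s(a, b1) ∈ M), ∏ e ∈ M, wt e)
      = wt s(b1, b2) * wt s(c1, c2) *
        ∑ N ∈ Finset.univ.filter
          (fun N : Finset (Sym2 V) => PMon G S N ∧ s(a, b3) ∈ N), ∏ e ∈ N, wt e := by
  have haS : a ∈ S := by rw [hS]; push_neg; exact ⟨nab1, nab2, nac1, nac2⟩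
  have hb3S : b3 ∈ S := by
    rw [hS]; push_neg
    exact ⟨fun h => nb13 h.symm, fun h => nb23 h.symm, fun h => nc1b3 h.symm,
      fun h => nc2b3 h.symm⟩
  have hb1S : b1 ∉ S := by rw [hS]; tauto
  have hb2S : b2 ∉ S := by rw [hS]; tauto
  have hc1S : c1 ∉ S := by rw [hS]; tauto
  have hc2S : c2 ∉ S := by rw [hS]; tauto
  -- pairwise distinctness of the special edges
  have e12 : s(a, b1) ≠ s(b2, b3) := by intro h; rw [Sym2.eq_iff] at h; tauto
  have e13 : s(a, b1) ≠ s(c1, c2) := by intro h; rw [Sym2.eq_iff] at h; tauto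
  have e23 : s(b2, b3) ≠ s(c1, c2) := by intro h; rw [Sym2.eq_iff] at h; tauto
  have e01 : s(a, b3) ≠ s(a, b1) := by intro h; rw [Sym2.eq_iff] at h; tauto
  have e02 : s(a, b3) ≠ s(b2, b3) := by intro h; rw [Sym2.eq_iff] at h; tauto
  have e03 : s(a, b3) ≠ s(c1, c2) := by intro h; rw [Sym2.eq_iff] at h; tauto
  -- key facts about a PM containing s(a,b1)
  have key : ∀ M : Finset (Sym2 V), G.IsPM M → s(a, b1) ∈ M →
      s(b2, b3) ∈ M ∧ s(c1, c2) ∈ M ∧ s(a, b3) ∉ M := by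
    intro M hM hab1M
    refine ⟨?_, ?_, ?_⟩
    · obtain ⟨w, hwM, hadj⟩ := isPM_edge_at hM b2
      rcases hNb2 w hadj with hw | hw
      · rw [hw] at hwM
        exfalso
        have := isPM_unique (v := b1) hM hwM hab1M (by simp) (by simp)
        rw [Sym2.eq_iff] at this; tauto
      · rw [hw] at hwM; exact hwM
    · obtain ⟨w, hwM, hadj⟩ := isPM_edge_at hM c1
      rcases hNc1 w hadj with hw | hw
      · rw [hw] at hwM
        exfalso
        have := isPM_unique (v := a) hM hwM hab1M (by simp) (by simp)
        rw [Sym2.eq_iff] at this; tauto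
      · rw [hw] at hwM; exact hwM
    · intro hab3M
      have := isPM_unique (v := a) hM hab3M hab1M (by simp) (by simp)
      rw [Sym2.eq_iff] at this; tauto
  rw [Finset.mul_sum]
  refine Finset.sum_nbij'
      (fun M => insert s(a, b3) (M \ {s(a, b1), s(b2, b3), s(c1, c2)}))
      (fun N => insert s(a, b1) (insert s(b2, b3) (insert s(c1, c2) (N \ {s(a, b3)}))))
      ?_ ?_ ?_ ?_ ?_
  · -- forward lands in target
    intro M hM
    rw [mem_filter] at hM ⊢
    obtain ⟨-, hM, hab1M⟩ := hM
    obtain ⟨hb23M, hccM, hab3M⟩ := key M hM hab1M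
    have hTmem : ∀ e, e ∈ M \ {s(a, b1), s(b2, b3), s(c1, c2)} ↔
        e ∈ M ∧ e ≠ s(a, b1) ∧ e ≠ s(b2, b3) ∧ e ≠ s(c1, c2) := by
      intro e
      rw [mem_sdiff, mem_insert, mem_insert, mem_singleton]
      tauto
    have hTa : ∀ e ∈ M \ {s(a, b1), s(b2, b3), s(c1, c2)}, a ∉ e := by
      intro e he hae
      rw [hTmem] at he
      exact he.2.1 (isPM_unique (v := a) hM he.1 hab1M hae (by simp))
    have hTb3 : ∀ e ∈ M \ {s(a, b1), s(b2, b3), s(c1, c2)}, b3 ∉ e := by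
      intro e he hae
      rw [hTmem] at he
      exact he.2.2.1 (isPM_unique (v := b3) hM he.1 hb23M hae (by simp))
    have hTS : ∀ e ∈ M \ {s(a, b1), s(b2, b3), s(c1, c2)}, ∀ v ∈ e, v ∈ S := by
      intro e he v hv
      rw [hTmem] at he
      rw [hS]
      rintro (h | h | h | h) <;> rw [h] at hv
      · exact he.2.1 (isPM_unique (v := b1) hM he.1 hab1M hv (by simp))
      · exact he.2.2.1 (isPM_unique (v := b2) hM he.1 hb23M hv (by simp))
      · exact he.2.2.2 (isPM_unique (v := c1) hM he.1 hccM hv (by simp))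
      · exact he.2.2.2 (isPM_unique (v := c2) hM he.1 hccM hv (by simp))
    refine ⟨mem_univ _, ⟨?_, ?_, ?_⟩, mem_insert_self _ _⟩
    · intro e he
      rw [mem_insert] at he
      rcases he with rfl | he
      · exact G.mem_edgeSet.mpr hb3a.symm
      · rw [hTmem] at he
        exact hM.1 e he.1
    · intro e he v hv
      rw [mem_insert] at he
      rcases he with rfl | he
      · rw [Sym2.mem_iff] at hv
        rcases hv with rfl | rfl
        · exact haS
        · exact hb3S
      · exact hTS e he v hv
    · intro v hv
      by_cases hva : v = a
      · subst hva
        refine ⟨s(v, b3), ⟨mem_insert_self _ _, by simp⟩, ?_⟩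
        rintro f ⟨hf, hvf⟩
        rw [mem_insert] at hf
        rcases hf with rfl | hf
        · rfl
        · exact absurd hvf (hTa f hf)
      by_cases hvb3 : v = b3
      · subst hvb3
        refine ⟨s(a, v), ⟨mem_insert_self _ _, by simp⟩, ?_⟩
        rintro f ⟨hf, hvf⟩
        rw [mem_insert] at hf
        rcases hf with rfl | hf
        · rfl
        · exact absurd hvf (hTb3 f hf)
      · obtain ⟨e, ⟨heM, hve⟩, hu⟩ := hM.2 v
        have heT : e ∈ M \ {s(a, b1), s(b2, b3), s(c1, c2)} := by
          rw [hTmem]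
          refine ⟨heM, ?_, ?_, ?_⟩
          · rintro rfl
            rw [Sym2.mem_iff] at hve
            rcases hve with rfl | rfl
            · exact hva rfl
            · exact hb1S hv
          · rintro rfl
            rw [Sym2.mem_iff] at hve
            rcases hve with rfl | rfl
            · exact hb2S hv
            · exact hvb3 rfl
          · rintro rfl
            rw [Sym2.mem_iff] at hve
            rcases hve with rfl | rfl
            · exact hc1S hv
            · exact hc2S hv
        refine ⟨e, ⟨mem_insert_of_mem heT, hve⟩, ?_⟩
        rintro f ⟨hf, hvf⟩
        rw [mem_insert] at hf
        rcases hf with rfl | hf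
        · exfalso
          rw [Sym2.mem_iff] at hvf
          rcases hvf with rfl | rfl
          · exact hva rfl
          · exact hvb3 rfl
        · rw [hTmem] at hf
          exact hu f ⟨hf.1, hvf⟩
  · -- backward lands in source
    intro N hN
    rw [mem_filter] at hN ⊢
    obtain ⟨-, hN, hab3N⟩ := hN
    have hUmem : ∀ e, e ∈ N \ {s(a, b3)} ↔ e ∈ N ∧ e ≠ s(a, b3) := by
      intro e; rw [mem_sdiff, mem_singleton]
    have hUa : ∀ e ∈ N \ {s(a, b3)}, a ∉ e := by
      intro e he hae
      rw [hUmem] at he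
      exact he.2 (pmon_unique (v := a) hN haS he.1 hab3N hae (by simp))
    have hUb3 : ∀ e ∈ N \ {s(a, b3)}, b3 ∉ e := by
      intro e he hae
      rw [hUmem] at he
      exact he.2 (pmon_unique (v := b3) hN hb3S he.1 hab3N hae (by simp))
    have hUS : ∀ e ∈ N \ {s(a, b3)}, ∀ v ∈ e, v ∈ S := by
      intro e he v hv
      rw [hUmem] at he
      exact hN.2.1 e he.1 v hv
    have hmem : ∀ f, f ∈ insert s(a, b1) (insert s(b2, b3) (insert s(c1, c2)
        (N \ {s(a, b3)}))) ↔ f = s(a, b1) ∨ f = s(b2, b3) ∨ f = s(c1, c2)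
        ∨ f ∈ N \ {s(a, b3)} := by
      intro f
      rw [mem_insert, mem_insert, mem_insert]
    refine ⟨mem_univ _, ⟨?_, ?_⟩, by rw [hmem]; tauto⟩
    · intro e he
      rw [hmem] at he
      rcases he with rfl | rfl | rfl | he
      · exact G.mem_edgeSet.mpr hab1
      · exact G.mem_edgeSet.mpr hb23
      · exact G.mem_edgeSet.mpr hc12
      · rw [hUmem] at he
        exact hN.1 e he.1
    · intro v
      -- six special vertices, then generic
      by_cases hva : v = a
      · subst hva
        refine ⟨s(v, b1), ⟨by rw [hmem]; tauto, by simp⟩, ?_⟩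
        rintro f ⟨hf, hvf⟩
        rw [hmem] at hf
        rcases hf with rfl | rfl | rfl | hf
        · rfl
        · exfalso; rw [Sym2.mem_iff] at hvf; tauto
        · exfalso; rw [Sym2.mem_iff] at hvf; tauto
        · exact absurd hvf (hUa f hf)
      by_cases hvb1 : v = b1
      · subst hvb1
        refine ⟨s(a, v), ⟨by rw [hmem]; tauto, by simp⟩, ?_⟩
        rintro f ⟨hf, hvf⟩
        rw [hmem] at hf
        rcases hf with rfl | rfl | rfl | hf
        · rfl
        · exfalso; rw [Sym2.mem_iff] at hvf; tauto
        · exfalso; rw [Sym2.mem_iff] at hvf; tauto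
        · exact absurd (hUS f hf v hvf) hb1S
      by_cases hvb2 : v = b2
      · subst hvb2
        refine ⟨s(v, b3), ⟨by rw [hmem]; tauto, by simp⟩, ?_⟩
        rintro f ⟨hf, hvf⟩
        rw [hmem] at hf
        rcases hf with rfl | rfl | rfl | hf
        · exfalso; rw [Sym2.mem_iff] at hvf; tauto
        · rfl
        · exfalso; rw [Sym2.mem_iff] at hvf; tauto
        · exact absurd (hUS f hf v hvf) hb2S
      by_cases hvb3 : v = b3
      · subst hvb3
        refine ⟨s(b2, v), ⟨by rw [hmem]; tauto, by simp⟩, ?_⟩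
        rintro f ⟨hf, hvf⟩
        rw [hmem] at hf
        rcases hf with rfl | rfl | rfl | hf
        · exfalso; rw [Sym2.mem_iff] at hvf; tauto
        · rfl
        · exfalso; rw [Sym2.mem_iff] at hvf; tauto
        · exact absurd hvf (hUb3 f hf)
      by_cases hvc1 : v = c1
      · subst hvc1
        refine ⟨s(v, c2), ⟨by rw [hmem]; tauto, by simp⟩, ?_⟩
        rintro f ⟨hf, hvf⟩
        rw [hmem] at hf
        rcases hf with rfl | rfl | rfl | hf
        · exfalso; rw [Sym2.mem_iff] at hvf; tauto
        · exfalso; rw [Sym2.mem_iff] at hvf; tauto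
        · rfl
        · exact absurd (hUS f hf v hvf) hc1S
      by_cases hvc2 : v = c2
      · subst hvc2
        refine ⟨s(c1, v), ⟨by rw [hmem]; tauto, by simp⟩, ?_⟩
        rintro f ⟨hf, hvf⟩
        rw [hmem] at hf
        rcases hf with rfl | rfl | rfl | hf
        · exfalso; rw [Sym2.mem_iff] at hvf; tauto
        · exfalso; rw [Sym2.mem_iff] at hvf; tauto
        · rfl
        · exact absurd (hUS f hf v hvf) hc2S
      · -- generic vertex
        have hvS : v ∈ S := by rw [hS]; tauto
        obtain ⟨e, ⟨heN, hve⟩, hu⟩ := hN.2.2 v hvS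
        have heU : e ∈ N \ {s(a, b3)} := by
          rw [hUmem]
          refine ⟨heN, ?_⟩
          rintro rfl
          rw [Sym2.mem_iff] at hve; tauto
        refine ⟨e, ⟨by rw [hmem]; tauto, hve⟩, ?_⟩
        rintro f ⟨hf, hvf⟩
        rw [hmem] at hf
        rcases hf with rfl | rfl | rfl | hf
        · exfalso; rw [Sym2.mem_iff] at hvf; tauto
        · exfalso; rw [Sym2.mem_iff] at hvf; tauto
        · exfalso; rw [Sym2.mem_iff] at hvf; tauto
        · rw [hUmem] at hf
          exact hu f ⟨hf.1, hvf⟩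
  · -- left inverse
    intro M hM
    rw [mem_filter] at hM
    obtain ⟨-, hM, hab1M⟩ := hM
    obtain ⟨hb23M, hccM, hab3M⟩ := key M hM hab1M
    beta_reduce
    have h1 : insert s(a, b3) (M \ {s(a, b1), s(b2, b3), s(c1, c2)}) \ {s(a, b3)}
        = M \ {s(a, b1), s(b2, b3), s(c1, c2)} := by
      ext e
      rw [mem_sdiff, mem_singleton, mem_insert]
      constructor
      · rintro ⟨rfl | he, hne⟩
        · exact absurd rfl hne
        · exact he
      · intro he
        refine ⟨Or.inr he, ?_⟩
        rintro rfl
        rw [mem_sdiff] at he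
        exact hab3M he.1
    rw [h1]
    ext e
    rw [mem_insert, mem_insert, mem_insert, mem_sdiff, mem_insert, mem_insert,
      mem_singleton]
    constructor
    · rintro (rfl | rfl | rfl | ⟨he, -⟩) <;> assumption
    · intro he
      by_cases h1 : e = s(a, b1); · tauto
      by_cases h2 : e = s(b2, b3); · tauto
      by_cases h3 : e = s(c1, c2); · tauto
      · exact Or.inr (Or.inr (Or.inr ⟨he, by tauto⟩))
  · -- right inverse
    intro N hN
    rw [mem_filter] at hN
    obtain ⟨-, hN, hab3N⟩ := hN
    have hb12N : s(a, b1) ∉ N := by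
      intro h; exact hb1S (hN.2.1 _ h b1 (by simp))
    have hb23N : s(b2, b3) ∉ N := by
      intro h; exact hb2S (hN.2.1 _ h b2 (by simp))
    have hccN : s(c1, c2) ∉ N := by
      intro h; exact hc1S (hN.2.1 _ h c1 (by simp))
    beta_reduce
    ext e
    simp only [mem_insert, mem_sdiff, mem_singleton]
    constructor
    · rintro (rfl | ⟨h, hne⟩)
      · exact hab3N
      · rcases h with rfl | rfl | rfl | ⟨he, -⟩
        · exact absurd (Or.inl rfl) hne
        · exact absurd (Or.inr (Or.inl rfl)) hne
        · exact absurd (Or.inr (Or.inr rfl)) hne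
        · exact he
    · intro he
      by_cases h0 : e = s(a, b3)
      · exact Or.inl h0
      · refine Or.inr ⟨Or.inr (Or.inr (Or.inr ⟨he, h0⟩)), ?_⟩
        rintro (rfl | rfl | rfl)
        · exact hb12N he
        · exact hb23N he
        · exact hccN he
  · -- weights
    intro M hM
    rw [mem_filter] at hM
    obtain ⟨-, hM, hab1M⟩ := hM
    obtain ⟨hb23M, hccM, hab3M⟩ := key M hM hab1M
    beta_reduce
    have hMeq : M = insert s(a, b1) (insert s(b2, b3) (insert s(c1, c2)
        (M \ {s(a, b1), s(b2, b3), s(c1, c2)}))) := by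
      ext e
      rw [mem_insert, mem_insert, mem_insert, mem_sdiff, mem_insert, mem_insert,
        mem_singleton]
      constructor
      · intro he
        by_cases h1 : e = s(a, b1); · tauto
        by_cases h2 : e = s(b2, b3); · tauto
        by_cases h3 : e = s(c1, c2); · tauto
        · exact Or.inr (Or.inr (Or.inr ⟨he, by tauto⟩))
      · rintro (rfl | rfl | rfl | ⟨he, -⟩) <;> assumption
    have hab3T : s(a, b3) ∉ M \ {s(a, b1), s(b2, b3), s(c1, c2)} := by
      rw [mem_sdiff]
      rintro ⟨h, -⟩
      exact hab3M h
    conv_lhs => rw [hMeq]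
    rw [Finset.prod_insert (by simp [e12, e13]),
      Finset.prod_insert (by simp [e23]),
      Finset.prod_insert (by simp),
      Finset.prod_insert hab3T]
    have h : wt s(a, b1) * wt s(b2, b3) = wt s(b1, b2) * wt s(a, b3) := by
      rw [hwb, show s(b3, a) = s(a, b3) from Sym2.eq_swap]
    linear_combination
      (wt s(c1, c2) * ∏ e ∈ M \ {s(a, b1), s(b2, b3), s(c1, c2)}, wt e) * h

end CiucuAux

open CiucuAux in
set_option maxHeartbeats 1000000 in
/-- Ciucu's lemma on two 4-cycles sharing a vertex `a`: if the 4-cycles are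
`a,b₁,b₂,b₃` and `a,c₁,c₂,c₃`, only `b₃` and `c₃` have neighbors outside the
7-vertex subgraph, and in each 4-cycle the products of the weights of opposite
edges agree, then deleting `b₁,b₂,c₁,c₂` divides the matching count by
`2 · wt(b₁b₂) · wt(c₁c₂)`. -/
theorem ciucu_two_four_cycles {V : Type} [Fintype V] [DecidableEq V]
    (G : SimpleGraph V) (wt : Sym2 V → ℚ)
    (a b1 b2 b3 c1 c2 c3 : V)
    (hdist : ([a, b1, b2, b3, c1, c2, c3] : List V).Pairwise (· ≠ ·))
    (hab1 : G.Adj a b1) (hb12 : G.Adj b1 b2) (hb23 : G.Adj b2 b3) (hb3a : G.Adj b3 a)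
    (hac1 : G.Adj a c1) (hc12 : G.Adj c1 c2) (hc23 : G.Adj c2 c3) (hc3a : G.Adj c3 a)
    (hNa : ∀ w, G.Adj a w → w = b1 ∨ w = b3 ∨ w = c1 ∨ w = c3)
    (hNb1 : ∀ w, G.Adj b1 w → w = a ∨ w = b2)
    (hNb2 : ∀ w, G.Adj b2 w → w = b1 ∨ w = b3)
    (hNc1 : ∀ w, G.Adj c1 w → w = a ∨ w = c2)
    (hNc2 : ∀ w, G.Adj c2 w → w = c1 ∨ w = c3)
    (hwb : wt s(a, b1) * wt s(b2, b3) = wt s(b1, b2) * wt s(b3, a))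
    (hwc : wt s(a, c1) * wt s(c2, c3) = wt s(c1, c2) * wt s(c3, a)) :
    matchSum G wt
      = 2 * wt s(b1, b2) * wt s(c1, c2)
        * matchSum (G.induce {v : V | v ∉ ({b1, b2, c1, c2} : Set V)})
            (fun f => wt (Sym2.map Subtype.val f)) := by
  simp only [List.pairwise_cons, List.mem_cons, List.not_mem_nil, or_false,
    List.mem_singleton, List.Pairwise.nil, forall_eq_or_imp, forall_eq,
    List.Pairwise, and_true] at hdist
  obtain ⟨⟨nab1, nab2, nab3, nac1, nac2, nac3⟩, ⟨nb12, nb13, nb1c1, nb1c2, nb1c3⟩,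
    ⟨nb23, nb2c1, nb2c2, nb2c3⟩, ⟨nb3c1, nb3c2, nb3c3⟩, ⟨nc12, nc13⟩, nc23, -⟩ := hdist
  set S : Set V := {v : V | v ∉ ({b1, b2, c1, c2} : Set V)} with hSdef
  have hS : ∀ v, v ∈ S ↔ ¬(v = b1 ∨ v = b2 ∨ v = c1 ∨ v = c2) := by
    intro v
    simp only [hSdef, Set.mem_setOf_eq, Set.mem_insert_iff, Set.mem_singleton_iff]
  have hS' : ∀ v, v ∈ S ↔ ¬(v = c1 ∨ v = c2 ∨ v = b1 ∨ v = b2) := by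
    intro v; rw [hS]; tauto
  have haS : a ∈ S := by rw [hS]; push_neg; exact ⟨nab1, nab2, nac1, nac2⟩
  -- split the matchings of G' by the partner of a
  have hsplitN : Finset.univ.filter (fun N : Finset (Sym2 V) => PMon G S N)
      = Finset.univ.filter (fun N : Finset (Sym2 V) => PMon G S N ∧ s(a, b3) ∈ N)
        ∪ Finset.univ.filter (fun N : Finset (Sym2 V) => PMon G S N ∧ s(a, c3) ∈ N) := by
    ext N
    simp only [mem_filter, mem_union, mem_univ, true_and]
    constructor
    · intro hN
      obtain ⟨w, hwN, hadj, hwS⟩ := pmon_edge_at hN haS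
      rcases hNa w hadj with h | h | h | h <;> rw [h] at hwN hwS
      · exact absurd hwS (by rw [hS]; tauto)
      · exact Or.inl ⟨hN, hwN⟩
      · exact absurd hwS (by rw [hS]; tauto)
      · exact Or.inr ⟨hN, hwN⟩
    · tauto
  have hdisjN : Disjoint
      (Finset.univ.filter (fun N : Finset (Sym2 V) => PMon G S N ∧ s(a, b3) ∈ N))
      (Finset.univ.filter (fun N : Finset (Sym2 V) => PMon G S N ∧ s(a, c3) ∈ N)) := by
    rw [Finset.disjoint_left]
    intro N hN1 hN2
    rw [mem_filter] at hN1 hN2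
    have := pmon_unique (v := a) hN1.2.1 haS hN1.2.2 hN2.2.2 (by simp) (by simp)
    rw [Sym2.eq_iff] at this; tauto
  -- split the matchings of G by the partner of a
  have hsplitM : Finset.univ.filter (fun M : Finset (Sym2 V) => G.IsPM M)
      = ((Finset.univ.filter (fun M : Finset (Sym2 V) => G.IsPM M ∧ s(a, b1) ∈ M)
        ∪ Finset.univ.filter (fun M : Finset (Sym2 V) => G.IsPM M ∧ s(a, b3) ∈ M))
        ∪ Finset.univ.filter (fun M : Finset (Sym2 V) => G.IsPM M ∧ s(a, c1) ∈ M))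
        ∪ Finset.univ.filter (fun M : Finset (Sym2 V) => G.IsPM M ∧ s(a, c3) ∈ M) := by
    ext M
    simp only [mem_filter, mem_union, mem_univ, true_and]
    constructor
    · intro hM
      obtain ⟨w, hwM, hadj⟩ := isPM_edge_at hM a
      rcases hNa w hadj with h | h | h | h <;> rw [h] at hwM
      · exact Or.inl (Or.inl (Or.inl ⟨hM, hwM⟩))
      · exact Or.inl (Or.inl (Or.inr ⟨hM, hwM⟩))
      · exact Or.inl (Or.inr ⟨hM, hwM⟩)
      · exact Or.inr ⟨hM, hwM⟩
    · tauto
  have hpair : ∀ x y : V, x ≠ y →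
      Disjoint (Finset.univ.filter (fun M : Finset (Sym2 V) => G.IsPM M ∧ s(a, x) ∈ M))
        (Finset.univ.filter (fun M : Finset (Sym2 V) => G.IsPM M ∧ s(a, y) ∈ M)) := by
    intro x y hxy
    rw [Finset.disjoint_left]
    intro M hM1 hM2
    rw [mem_filter] at hM1 hM2
    have hax : a ≠ x := by
      rintro rfl
      have := hM1.2.1.1 _ hM1.2.2
      rw [SimpleGraph.mem_edgeSet] at this
      exact G.irrefl this
    have := isPM_unique (v := a) hM1.2.1 hM1.2.2 hM2.2.2 (by simp) (by simp)
    rw [Sym2.eq_iff] at this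
    rcases this with ⟨-, h⟩ | ⟨h1, h2⟩
    · exact hxy h
    · exact hax h2.symm
  have d1 : Disjoint
      (Finset.univ.filter (fun M : Finset (Sym2 V) => G.IsPM M ∧ s(a, b1) ∈ M))
      (Finset.univ.filter (fun M : Finset (Sym2 V) => G.IsPM M ∧ s(a, b3) ∈ M)) :=
    hpair b1 b3 nb13
  have d2 : Disjoint
      ((Finset.univ.filter (fun M : Finset (Sym2 V) => G.IsPM M ∧ s(a, b1) ∈ M))
        ∪ (Finset.univ.filter (fun M : Finset (Sym2 V) => G.IsPM M ∧ s(a, b3) ∈ M)))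
      (Finset.univ.filter (fun M : Finset (Sym2 V) => G.IsPM M ∧ s(a, c1) ∈ M)) := by
    rw [Finset.disjoint_union_left]
    exact ⟨hpair b1 c1 nb1c1, hpair b3 c1 (fun h => nb3c1 h)⟩
  have d3 : Disjoint
      (((Finset.univ.filter (fun M : Finset (Sym2 V) => G.IsPM M ∧ s(a, b1) ∈ M))
        ∪ (Finset.univ.filter (fun M : Finset (Sym2 V) => G.IsPM M ∧ s(a, b3) ∈ M)))
        ∪ (Finset.univ.filter (fun M : Finset (Sym2 V) => G.IsPM M ∧ s(a, c1) ∈ M)))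
      (Finset.univ.filter (fun M : Finset (Sym2 V) => G.IsPM M ∧ s(a, c3) ∈ M)) := by
    rw [Finset.disjoint_union_left, Finset.disjoint_union_left]
    exact ⟨⟨hpair b1 c3 nb1c3, hpair b3 c3 nb3c3⟩, hpair c1 c3 nc13⟩
  have hA1 := side_near G wt a b1 b2 b3 c1 c2 S hS hab1 hb23 hc12 hb3a hNb2 hNc1 hwb
    nab1 nab2 nab3 nac1 nac2 nb12 nb13 nb23 nb1c1 nb1c2 nb2c1 nb2c2
    (fun h => nb3c1 h.symm) (fun h => nb3c2 h.symm)
  have hA3 := side_far G wt a b1 b2 b3 c1 c2 S hS hb12 hc12 hNb1 hNc1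
    nab1 nab2 nac1 nac2 nb13 nb23 (fun h => nb3c1 h.symm) (fun h => nb3c2 h.symm)
    nb1c1 nb1c2 nb2c1 nb2c2
  have hC1 := side_near G wt a c1 c2 c3 b1 b2 S hS' hac1 hc23 hb12 hc3a hNc2 hNb1 hwc
    nac1 nac2 nac3 nab1 nab2 nc12 nc13 nc23 (fun h => nb1c1 h.symm)
    (fun h => nb2c1 h.symm) (fun h => nb1c2 h.symm) (fun h => nb2c2 h.symm)
    nb1c3 nb2c3
  have hC3 := side_far G wt a c1 c2 c3 b1 b2 S hS' hc12 hb12 hNc1 hNb1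
    nac1 nac2 nab1 nab2 nc13 nc23 nb1c3 nb2c3 (fun h => nb1c1 h.symm)
    (fun h => nb2c1 h.symm) (fun h => nb1c2 h.symm) (fun h => nb2c2 h.symm)
  rw [show (G.induce {v : V | v ∉ ({b1, b2, c1, c2} : Set V)}) = G.induce S from rfl]
  erw [matchSum_induce G wt S]
  rw [hsplitN, Finset.sum_union hdisjN, matchSum, hsplitM,
    Finset.sum_union d3, Finset.sum_union d2, Finset.sum_union d1, hA1, hA3, hC1, hC3]
  ring
end
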